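/- arXiv:1910.12290 — 6 statements merged into one kernel-verified Lean document; each statement's English description precedes it below -/
import Mathlib

section
/- Let p be an odd prime, G a group, ρ : G → GL₂(𝔽_p) an absolutely irreducible homomorphism, and ε : G → {±1} a surjective homomorphism such that there exists a matrix A ∈ GL₂(𝔽_p) with A·ρ(σ)·A⁻¹ = ε(σ)·ρ(σ) for all σ ∈ G. Then ρ(σ) has trace 0 for every σ ∈ G with ε(σ) = −1, and there is a Cartan subgroup C of GL₂(𝔽_p) such that ρ(G) is contained in the normalizer of C in GL₂(𝔽_p) and ρ(G) ∩ C = ρ(ker ε). -/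
open Matrix

/-- The subgroup of invertible diagonal matrices in `GL₂(𝔽_p)`. -/
def diagGL (p : ℕ) : Subgroup (GL (Fin 2) (ZMod p)) where
  carrier := {g | ∃ v : Fin 2 → ZMod p,
    (g : Matrix (Fin 2) (Fin 2) (ZMod p)) = Matrix.diagonal v}
  one_mem' := ⟨1, Matrix.diagonal_one.symm⟩
  mul_mem' := by
    rintro g h ⟨v, hv⟩ ⟨w, hw⟩
    exact ⟨v * w, by rw [Units.val_mul, hv, hw, Matrix.diagonal_mul_diagonal]; rfl⟩
  inv_mem' := by
    rintro g ⟨v, hv⟩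
    exact ⟨Ring.inverse v, by rw [Matrix.coe_units_inv, hv, Matrix.inv_diagonal]⟩

/-- The subgroup of `GL₂(𝔽_p)` consisting of the units of a subalgebra `A` of the
`2×2` matrix ring, i.e. the invertible matrices `g` with both `g` and `g⁻¹` in `A`. -/
def unitsIn (p : ℕ) (A : Subalgebra (ZMod p) (Matrix (Fin 2) (Fin 2) (ZMod p))) :
    Subgroup (GL (Fin 2) (ZMod p)) where
  carrier := {g | ((g : GL (Fin 2) (ZMod p)) : Matrix (Fin 2) (Fin 2) (ZMod p)) ∈ A ∧
    ((g⁻¹ : GL (Fin 2) (ZMod p)) : Matrix (Fin 2) (Fin 2) (ZMod p)) ∈ A}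
  one_mem' := ⟨A.one_mem, by rw [inv_one]; exact A.one_mem⟩
  mul_mem' := fun {g h} hg hh => ⟨by rw [Units.val_mul]; exact A.mul_mem hg.1 hh.1,
    by rw [_root_.mul_inv_rev, Units.val_mul]; exact A.mul_mem hh.2 hg.2⟩
  inv_mem' := fun {g} hg => ⟨hg.2, by rw [inv_inv]; exact hg.1⟩

/-- A split Cartan subgroup of `GL₂(𝔽_p)`: a conjugate of the subgroup of invertible
diagonal matrices. -/
def IsSplitCartan (p : ℕ) (C : Subgroup (GL (Fin 2) (ZMod p))) : Prop :=
  ∃ g : GL (Fin 2) (ZMod p), C = Subgroup.map (MulAut.conj g).toMonoidHom (diagGL p)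

/-- A non-split Cartan subgroup of `GL₂(𝔽_p)`: the group of units of an
`𝔽_p`-subalgebra of the `2×2` matrix ring which is a field with `p²` elements. -/
def IsNonsplitCartan (p : ℕ) (C : Subgroup (GL (Fin 2) (ZMod p))) : Prop :=
  ∃ A : Subalgebra (ZMod p) (Matrix (Fin 2) (Fin 2) (ZMod p)),
    IsField A ∧ Nat.card A = p ^ 2 ∧ C = unitsIn p A

/-- A Cartan subgroup of `GL₂(𝔽_p)` is a split or non-split Cartan subgroup. -/
def IsCartan (p : ℕ) (C : Subgroup (GL (Fin 2) (ZMod p))) : Prop :=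
  IsSplitCartan p C ∨ IsNonsplitCartan p C

/-- A homomorphism `ρ : G → GL₂(𝔽_p)` is absolutely irreducible if no line of
`𝔽̄_p²` is preserved by every `ρ(σ)`. -/
def AbsIrreducible (p : ℕ) [Fact p.Prime] {G : Type*} [Group G] (ρ : G →* GL (Fin 2) (ZMod p)) : Prop :=
  ¬ ∃ v : Fin 2 → AlgebraicClosure (ZMod p), v ≠ 0 ∧
    ∀ σ : G, ∃ c : AlgebraicClosure (ZMod p),
      (((ρ σ : GL (Fin 2) (ZMod p)) : Matrix (Fin 2) (Fin 2) (ZMod p)).map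
        (algebraMap (ZMod p) (AlgebraicClosure (ZMod p)))).mulVec v = c • v


section AuxLemmas

variable {K : Type*} [Field K]

lemma aux_CH (m : Matrix (Fin 2) (Fin 2) K) (h : Matrix.trace m = 0) :
    m * m = (- m.det) • (1 : Matrix (Fin 2) (Fin 2) K) := by
  rw [Matrix.trace_fin_two] at h
  have h' : m 1 1 = - m 0 0 := by linear_combination h
  ext i j
  fin_cases i <;> fin_cases j <;>
    simp [Matrix.mul_apply, Fin.sum_univ_two, Matrix.det_fin_two, Matrix.one_apply, h'] <;> ring

lemma aux_diag_centralizer (d : Fin 2 → K) (hd : d 0 ≠ d 1)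
    (m : Matrix (Fin 2) (Fin 2) K)
    (h : m * Matrix.diagonal d = Matrix.diagonal d * m) :
    ∃ w : Fin 2 → K, m = Matrix.diagonal w := by
  refine ⟨fun i => m i i, ?_⟩
  have h01 := congrFun (congrFun h 0) 1
  have h10 := congrFun (congrFun h 1) 0
  simp [Matrix.mul_apply, Fin.sum_univ_two, Matrix.diagonal] at h01 h10
  have e01 : m 0 1 = 0 := by
    by_contra hne
    exact hd (mul_left_cancel₀ hne (by linear_combination h01)).symm
  have e10 : m 1 0 = 0 := by
    by_contra hne
    exact hd (mul_left_cancel₀ hne (by linear_combination h10))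
  ext i j
  fin_cases i <;> fin_cases j <;> simp [Matrix.diagonal, e01, e10]

lemma aux_span_centralizer (a m : Matrix (Fin 2) (Fin 2) K) (ht : Matrix.trace a = 0)
    (hb : a 0 1 ≠ 0) (h : m * a = a * m) :
    ∃ x y : K, m = x • (1 : Matrix (Fin 2) (Fin 2) K) + y • a := by
  rw [Matrix.trace_fin_two] at ht
  have ha' : a 1 1 = - a 0 0 := by linear_combination ht
  have h00 := congrFun (congrFun h 0) 0
  have h01 := congrFun (congrFun h 0) 1
  simp [Matrix.mul_apply, Fin.sum_univ_two] at h00 h01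
  rw [ha'] at h01
  refine ⟨m 0 0 - (m 0 1 / a 0 1) * a 0 0, m 0 1 / a 0 1, ?_⟩
  ext i j
  fin_cases i <;> fin_cases j <;>
      simp [Matrix.one_apply, ha'] <;> field_simp
  all_goals first
    | linear_combination -h00
    | linear_combination h00
    | linear_combination -h01 - h00
    | linear_combination h01 + h00
    | linear_combination h01
    | linear_combination -h01

lemma aux_span_centralizer' (a m : Matrix (Fin 2) (Fin 2) K) (ht : Matrix.trace a = 0)
    (hb : a 0 1 ≠ 0 ∨ a 1 0 ≠ 0) (h : m * a = a * m) :
    ∃ x y : K, m = x • (1 : Matrix (Fin 2) (Fin 2) K) + y • a := by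
  rcases hb with hb | hb
  · exact aux_span_centralizer a m ht hb h
  · obtain ⟨x, y, hxy⟩ := aux_span_centralizer aᵀ mᵀ (by simpa [Matrix.trace_transpose] using ht)
      (by simpa using hb) (by rw [← Matrix.transpose_mul, ← Matrix.transpose_mul, h])
    refine ⟨x, y, ?_⟩
    have := congrArg Matrix.transpose hxy
    simpa [Matrix.transpose_add, Matrix.transpose_smul] using this

lemma aux_diagonalize (h2 : (2:K) ≠ 0) (a : Matrix (Fin 2) (Fin 2) K)
    (ht : Matrix.trace a = 0) (hdet : a.det ≠ 0) (μ : K) (hμ : μ * μ = - a.det) :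
    ∃ g : Matrix (Fin 2) (Fin 2) K, g.det ≠ 0 ∧ ∃ d : Fin 2 → K, d 0 ≠ d 1 ∧
      a * g = g * Matrix.diagonal d := by
  rw [Matrix.trace_fin_two] at ht
  have ha' : a 1 1 = - a 0 0 := by linear_combination ht
  rw [Matrix.det_fin_two] at hdet hμ
  have hμ0 : μ ≠ 0 := by
    intro h; rw [h] at hμ; apply hdet
    linear_combination hμ
  rcases eq_or_ne (a 0 1) 0 with hb | hb
  · have h00 : a 0 0 ≠ 0 := by
      intro h
      apply hμ0
      have hsq : μ * μ = 0 := by rw [hμ, ha', hb, h]; ring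
      exact mul_self_eq_zero.mp hsq
    refine ⟨!![2 * a 0 0, 0; a 1 0, 1], ?_, ![a 0 0, - a 0 0], ?_, ?_⟩
    · rw [Matrix.det_fin_two_of]
      simpa using mul_ne_zero h2 h00
    · simp only [Matrix.cons_val_zero, Matrix.cons_val_one, Matrix.head_cons]
      intro h
      have h2a : (2:K) * a 0 0 = 0 := by linear_combination h
      exact h00 ((mul_eq_zero.mp h2a).resolve_left h2)
    · ext i j
      fin_cases i <;> fin_cases j <;>
        simp [Matrix.mul_apply, Fin.sum_univ_two, Matrix.diagonal, ha', hb] <;> ring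
  · refine ⟨!![a 0 1, a 0 1; μ - a 0 0, -μ - a 0 0], ?_, ![μ, -μ], ?_, ?_⟩
    · rw [Matrix.det_fin_two_of]
      intro h
      have h2a : (2:K) * (a 0 1 * μ) = 0 := by linear_combination -h
      exact (mul_ne_zero h2 (mul_ne_zero hb hμ0)) h2a
    · simp only [Matrix.cons_val_zero, Matrix.cons_val_one, Matrix.head_cons]
      intro h
      have h2a : (2:K) * μ = 0 := by linear_combination h
      exact hμ0 ((mul_eq_zero.mp h2a).resolve_left h2)
    · ext i j
      fin_cases i <;> fin_cases j <;>
        simp [Matrix.mul_apply, Fin.sum_univ_two, Matrix.diagonal, ha'] <;>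
        first
          | linear_combination -hμ
          | linear_combination -hμ + a 0 0 * ha'
          | linear_combination (-2) * hμ + a 0 0 * ha'
          | linear_combination -2 * hμ - a 0 0 * ha'
          | ring

lemma spanAlg_mul (a : Matrix (Fin 2) (Fin 2) K) (lam : K)
    (ha : a * a = lam • (1 : Matrix (Fin 2) (Fin 2) K)) (x y x' y' : K) :
    (x • (1 : Matrix (Fin 2) (Fin 2) K) + y • a) * (x' • (1 : Matrix (Fin 2) (Fin 2) K) + y' • a)
      = (x * x' + y * y' * lam) • (1 : Matrix (Fin 2) (Fin 2) K) + (x * y' + y * x') • a := by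
  simp only [mul_add, add_mul, smul_mul_assoc, mul_smul_comm, smul_smul, mul_one, one_mul, ha]
  module

def spanAlg (a : Matrix (Fin 2) (Fin 2) K) (lam : K)
    (ha : a * a = lam • (1 : Matrix (Fin 2) (Fin 2) K)) : Subalgebra K (Matrix (Fin 2) (Fin 2) K) where
  carrier := {m | ∃ x y : K, m = x • 1 + y • a}
  add_mem' := by
    rintro m n ⟨x, y, rfl⟩ ⟨x', y', rfl⟩
    exact ⟨x + x', y + y', by module⟩
  mul_mem' := by
    rintro m n ⟨x, y, rfl⟩ ⟨x', y', rfl⟩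
    exact ⟨x * x' + y * y' * lam, x * y' + y * x', spanAlg_mul a lam ha x y x' y'⟩
  one_mem' := ⟨1, 0, by simp⟩
  zero_mem' := ⟨0, 0, by simp⟩
  algebraMap_mem' := fun r => ⟨r, 0, by simp [Algebra.algebraMap_eq_smul_one]⟩

lemma mem_spanAlg {a : Matrix (Fin 2) (Fin 2) K} {lam : K}
    {ha : a * a = lam • (1 : Matrix (Fin 2) (Fin 2) K)} {m : Matrix (Fin 2) (Fin 2) K} :
    m ∈ spanAlg a lam ha ↔ ∃ x y : K, m = x • 1 + y • a := Iff.rfl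

lemma spanAlg_indep (a : Matrix (Fin 2) (Fin 2) K)
    (hns : ∀ c : K, a ≠ c • (1 : Matrix (Fin 2) (Fin 2) K))
    {x y : K} (h : x • (1 : Matrix (Fin 2) (Fin 2) K) + y • a = 0) :
    x = 0 ∧ y = 0 := by
  have hy : y = 0 := by
    by_contra hy
    exact hns (-x / y) (by
      have hya : y • a = (-x) • (1 : Matrix (Fin 2) (Fin 2) K) := by
        rw [neg_smul]; rw [add_eq_zero_iff_eq_neg] at h; linear_combination (norm := module) h
      calc a = y⁻¹ • (y • a) := by rw [smul_smul, inv_mul_cancel₀ hy, one_smul]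
        _ = (-x / y) • (1 : Matrix (Fin 2) (Fin 2) K) := by rw [hya, smul_smul]; ring_nf)
  refine ⟨?_, hy⟩
  rw [hy, zero_smul, add_zero] at h
  have := congrFun (congrFun h 0) 0
  simpa using this

noncomputable def spanAlgEquiv (a : Matrix (Fin 2) (Fin 2) K) (lam : K)
    (ha : a * a = lam • (1 : Matrix (Fin 2) (Fin 2) K))
    (hns : ∀ c : K, a ≠ c • (1 : Matrix (Fin 2) (Fin 2) K)) :
    (K × K) ≃ (spanAlg a lam ha) :=
  Equiv.ofBijective (fun z => ⟨z.1 • 1 + z.2 • a, ⟨z.1, z.2, rfl⟩⟩)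
    (by
      constructor
      · rintro ⟨x, y⟩ ⟨x', y'⟩ hxy
        have hz : (x - x') • (1 : Matrix (Fin 2) (Fin 2) K) + (y - y') • a = 0 := by
          have := Subtype.ext_iff.mp hxy
          simp only at this
          linear_combination (norm := module) this
        obtain ⟨h1, h2⟩ := spanAlg_indep a hns hz
        have hx : x = x' := by linear_combination h1
        have hy : y = y' := by linear_combination h2
        simp_all
      · rintro ⟨m, x, y, rfl⟩
        exact ⟨(x, y), rfl⟩)

lemma spanAlg_isField (a : Matrix (Fin 2) (Fin 2) K) (lam : K)
    (ha : a * a = lam • (1 : Matrix (Fin 2) (Fin 2) K))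
    (hnsq : ∀ μ : K, μ * μ ≠ lam) : IsField (spanAlg a lam ha) := by
  constructor
  · exact ⟨0, 1, fun h => by
      have := Subtype.ext_iff.mp h
      simp only [ZeroMemClass.coe_zero, OneMemClass.coe_one] at this
      exact zero_ne_one (α := Matrix (Fin 2) (Fin 2) K) this⟩
  · rintro ⟨m, hm⟩ ⟨n, hn⟩
    obtain ⟨x, y, rfl⟩ := hm
    obtain ⟨x', y', rfl⟩ := hn
    apply Subtype.ext
    show (x • (1:Matrix (Fin 2) (Fin 2) K) + y • a) * (x' • 1 + y' • a)
        = (x' • (1:Matrix (Fin 2) (Fin 2) K) + y' • a) * (x • 1 + y • a)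
    rw [spanAlg_mul a lam ha, spanAlg_mul a lam ha]
    ring_nf
  · rintro ⟨m, hm⟩ h0
    obtain ⟨x, y, rfl⟩ := hm
    have hxy : ¬(x = 0 ∧ y = 0) := by
      rintro ⟨rfl, rfl⟩
      exact h0 (Subtype.ext (by simp))
    have hs : x * x - lam * (y * y) ≠ 0 := by
      rcases eq_or_ne y 0 with rfl | hy
      · have hx : x ≠ 0 := fun hx => hxy ⟨hx, rfl⟩
        simpa using mul_ne_zero hx hx
      · intro h
        exact hnsq (x / y) (by field_simp; linear_combination h)
    set s := x * x - lam * (y * y) with hsdef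
    refine ⟨⟨(x/s) • 1 + (-y/s) • a, ⟨x/s, -y/s, rfl⟩⟩, Subtype.ext ?_⟩
    show (x • (1:Matrix (Fin 2) (Fin 2) K) + y • a) * ((x/s) • 1 + (-y/s) • a) = 1
    rw [spanAlg_mul a lam ha]
    have c1 : x * (x/s) + y * (-y/s) * lam = 1 := by field_simp; ring
    have c2 : x * (-y/s) + y * (x/s) = 0 := by field_simp; ring
    rw [c1, c2]
    simp

end AuxLemmas

section GLAux

variable {p : ℕ} [Fact p.Prime]

lemma aux_split_char (A Gu : GL (Fin 2) (ZMod p)) (d : Fin 2 → ZMod p)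
    (hd : d 0 ≠ d 1)
    (hAG : (A : Matrix (Fin 2) (Fin 2) (ZMod p)) * (Gu : Matrix (Fin 2) (Fin 2) (ZMod p))
      = (Gu : Matrix (Fin 2) (Fin 2) (ZMod p)) * Matrix.diagonal d) :
    ∀ x : GL (Fin 2) (ZMod p),
      x ∈ Subgroup.map (MulAut.conj Gu).toMonoidHom (diagGL p) ↔ Commute x A := by
  have hDval : ((Gu⁻¹ * A * Gu : GL (Fin 2) (ZMod p)) : Matrix (Fin 2) (Fin 2) (ZMod p))
      = Matrix.diagonal d := by
    calc ((Gu⁻¹ * A * Gu : GL (Fin 2) (ZMod p)) : Matrix (Fin 2) (Fin 2) (ZMod p))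
        = (Gu⁻¹ : GL (Fin 2) (ZMod p)).val * (A.val * Gu.val) := by
          rw [Units.val_mul, Units.val_mul, mul_assoc]
      _ = ((Gu⁻¹ : GL (Fin 2) (ZMod p)).val * Gu.val) * Matrix.diagonal d := by
          rw [hAG, mul_assoc]
      _ = Matrix.diagonal d := by rw [← Units.val_mul, inv_mul_cancel, Units.val_one, one_mul]
  intro x
  constructor
  · rintro ⟨y, ⟨w, hw⟩, rfl⟩
    have hyD : Commute y (Gu⁻¹ * A * Gu) := by
      rw [← Commute.units_val_iff, hDval, hw]
      rw [Commute]; rw [SemiconjBy]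
      have hcw : (fun i => w i * d i) = fun i => d i * w i := funext fun i => mul_comm _ _
      rw [Matrix.diagonal_mul_diagonal, Matrix.diagonal_mul_diagonal, hcw]
    have := hyD.map (MulAut.conj Gu).toMonoidHom
    simp only [MulEquiv.toMonoidHom_eq_coe, MonoidHom.coe_coe, MulAut.conj_apply] at this ⊢
    rw [show Gu * (Gu⁻¹ * A * Gu) * Gu⁻¹ = A by group] at this
    exact this
  · intro hx
    refine ⟨Gu⁻¹ * x * Gu, ?_, ?_⟩
    · have hyD : Commute (Gu⁻¹ * x * Gu) (Gu⁻¹ * A * Gu) := by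
        have := hx.map (MulAut.conj Gu⁻¹).toMonoidHom
        simp only [MulEquiv.toMonoidHom_eq_coe, MonoidHom.coe_coe, MulAut.conj_apply, inv_inv]
          at this
        exact this
      have hval : ((Gu⁻¹ * x * Gu : GL (Fin 2) (ZMod p)) : Matrix (Fin 2) (Fin 2) (ZMod p))
          * Matrix.diagonal d
          = Matrix.diagonal d * ((Gu⁻¹ * x * Gu : GL (Fin 2) (ZMod p)) : Matrix (Fin 2) (Fin 2) (ZMod p)) := by
        calc ((Gu⁻¹ * x * Gu : GL (Fin 2) (ZMod p)) : Matrix (Fin 2) (Fin 2) (ZMod p)) * Matrix.diagonal d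
            = ((Gu⁻¹ * x * Gu) * (Gu⁻¹ * A * Gu) : GL (Fin 2) (ZMod p)).val := by
              rw [Units.val_mul (Gu⁻¹ * x * Gu) (Gu⁻¹ * A * Gu), hDval]
          _ = ((Gu⁻¹ * A * Gu) * (Gu⁻¹ * x * Gu) : GL (Fin 2) (ZMod p)).val := by rw [hyD]
          _ = Matrix.diagonal d * ((Gu⁻¹ * x * Gu : GL (Fin 2) (ZMod p)) : Matrix (Fin 2) (Fin 2) (ZMod p)) := by
              rw [Units.val_mul (Gu⁻¹ * A * Gu) (Gu⁻¹ * x * Gu), hDval]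
      exact aux_diag_centralizer d hd _ hval
    · simp only [MulEquiv.toMonoidHom_eq_coe, MonoidHom.coe_coe, MulAut.conj_apply]
      group

lemma aux_nonsplit_char (A : GL (Fin 2) (ZMod p)) (lam : ZMod p)
    (ha : (A : Matrix (Fin 2) (Fin 2) (ZMod p)) * A = lam • (1 : Matrix (Fin 2) (Fin 2) (ZMod p)))
    (ht : Matrix.trace (A : Matrix (Fin 2) (Fin 2) (ZMod p)) = 0)
    (hb : (A : Matrix (Fin 2) (Fin 2) (ZMod p)) 0 1 ≠ 0 ∨ (A : Matrix (Fin 2) (Fin 2) (ZMod p)) 1 0 ≠ 0) :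
    ∀ x : GL (Fin 2) (ZMod p), x ∈ unitsIn p (spanAlg (A : Matrix (Fin 2) (Fin 2) (ZMod p)) lam ha)
      ↔ Commute x A := by
  have key : ∀ m : Matrix (Fin 2) (Fin 2) (ZMod p),
      m ∈ spanAlg (A : Matrix (Fin 2) (Fin 2) (ZMod p)) lam ha →
      m * A = (A : Matrix (Fin 2) (Fin 2) (ZMod p)) * m := by
    rintro m ⟨x, y, rfl⟩
    simp only [mul_add, add_mul, smul_mul_assoc, mul_smul_comm, one_mul, mul_one]
  intro x
  constructor
  · rintro ⟨hm, _⟩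
    rw [← Commute.units_val_iff]
    exact key _ hm
  · intro hx
    have hxv : (x : Matrix (Fin 2) (Fin 2) (ZMod p)) * A = (A : Matrix (Fin 2) (Fin 2) (ZMod p)) * x :=
      Commute.units_val_iff.mpr hx
    have hxi : ((x⁻¹ : GL (Fin 2) (ZMod p)) : Matrix (Fin 2) (Fin 2) (ZMod p)) * A
        = (A : Matrix (Fin 2) (Fin 2) (ZMod p)) * (x⁻¹ : GL (Fin 2) (ZMod p)) :=
      Commute.units_val_iff.mpr hx.inv_left
    constructor
    · obtain ⟨u, v, huv⟩ := aux_span_centralizer' _ _ ht hb hxv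
      exact ⟨u, v, huv⟩
    · obtain ⟨u, v, huv⟩ := aux_span_centralizer' _ _ ht hb hxi
      exact ⟨u, v, huv⟩

lemma aux_norm_helper (x A h : GL (Fin 2) (ZMod p))
    (hx : A * x = x * A ∨ A * x = -(x * A)) :
    (Commute h A ↔ Commute (x * h * x⁻¹) A) := by
  have hfix : x * A * x⁻¹ = A ∨ x * A * x⁻¹ = -A := by
    rcases hx with hx | hx
    · left; rw [← hx]; group
    · right
      have : x * A = -(A * x) := by rw [hx]; simp
      rw [this]
      calc -(A * x) * x⁻¹ = -(A * x * x⁻¹) := by rw [neg_mul]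
        _ = -A := by group
  constructor
  · intro hc
    have hmap := hc.map (MulAut.conj x).toMonoidHom
    simp only [MulEquiv.toMonoidHom_eq_coe, MonoidHom.coe_coe, MulAut.conj_apply] at hmap
    rcases hfix with hf | hf
    · rwa [hf] at hmap
    · rw [hf] at hmap
      exact (Commute.neg_right_iff).mp hmap
  · intro hc
    have hmap := hc.map (MulAut.conj x⁻¹).toMonoidHom
    simp only [MulEquiv.toMonoidHom_eq_coe, MonoidHom.coe_coe, MulAut.conj_apply, inv_inv] at hmap
    have hh : x⁻¹ * (x * h * x⁻¹) * x = h := by group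
    rw [hh] at hmap
    rcases hfix with hf | hf
    · have : x⁻¹ * A * x = A := by
        conv_lhs => rw [← hf]
        group
      rwa [this] at hmap
    · have : x⁻¹ * A * x = -A := by
        have h1 : A = -(x * A * x⁻¹) := by rw [hf]; simp
        calc x⁻¹ * A * x = x⁻¹ * -(x * A * x⁻¹) * x := by rw [← h1]
          _ = -(x⁻¹ * (x * A * x⁻¹) * x) := by rw [mul_neg, neg_mul]
          _ = -A := by rw [show x⁻¹ * (x * A * x⁻¹) * x = A by group]
      rw [this] at hmap
      exact (Commute.neg_right_iff).mp hmap

end GLAux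

/-!
Statement 8: if `ρ : G → GL₂(𝔽_p)` is absolutely irreducible and `ε : G → {±1}` is a
surjective homomorphism with `A·ρ(σ)·A⁻¹ = ε(σ)·ρ(σ)` for all `σ`, then `ρ(σ)` has
trace `0` whenever `ε(σ) = −1`, and `ρ(G)` is contained in the normalizer of a Cartan
subgroup `C` with `ρ(G) ∩ C = ρ(ker ε)`.
-/

theorem absIrred_twist_self_normalizer_of_cartan (p : ℕ) [Fact p.Prime] (hp : Odd p)
    {G : Type*} [Group G] (ρ : G →* GL (Fin 2) (ZMod p)) (hirr : AbsIrreducible p ρ)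
    (ε : G →* ℤˣ) (hsurj : Function.Surjective ε)
    (A : GL (Fin 2) (ZMod p))
    (hA : ∀ σ : G, ((A * ρ σ * A⁻¹ : GL (Fin 2) (ZMod p)) : Matrix (Fin 2) (Fin 2) (ZMod p)) =
      ((ε σ : ℤ)) • ((ρ σ : GL (Fin 2) (ZMod p)) : Matrix (Fin 2) (Fin 2) (ZMod p))) :
    (∀ σ : G, ε σ = -1 →
      Matrix.trace ((ρ σ : GL (Fin 2) (ZMod p)) : Matrix (Fin 2) (Fin 2) (ZMod p)) = 0) ∧
    ∃ C : Subgroup (GL (Fin 2) (ZMod p)), IsCartan p C ∧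
      ρ.range ≤ Subgroup.normalizer (C : Set (GL (Fin 2) (ZMod p))) ∧ ρ.range ⊓ C = Subgroup.map ρ ε.ker := by
  classical
  have hp2 : p ≠ 2 := by
    rintro rfl
    exact (by decide : ¬ Odd 2) hp
  have h2 : (2 : ZMod p) ≠ 0 := by
    have h2' : ((2:ℕ) : ZMod p) ≠ 0 := by
      rw [Ne, ZMod.natCast_eq_zero_iff]
      intro hdvd
      exact hp2 ((Nat.prime_dvd_prime_iff_eq Fact.out Nat.prime_two).mp hdvd)
    exact_mod_cast h2'
  have hone_ne : (1 : ℤˣ) ≠ -1 := by decide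
  -- sign dichotomy at unit level
  have hsgn : ∀ σ : G, (ε σ = 1 ∧ A * ρ σ = ρ σ * A) ∨ (ε σ = -1 ∧ A * ρ σ = -(ρ σ * A)) := by
    intro σ
    rcases Int.units_eq_one_or (ε σ) with h1 | h1
    · left
      refine ⟨h1, ?_⟩
      have hv := hA σ
      rw [h1] at hv
      simp only [Units.val_one, one_smul] at hv
      have heq : A * ρ σ * A⁻¹ = ρ σ := Units.ext hv
      calc A * ρ σ = (A * ρ σ * A⁻¹) * A := by group
        _ = ρ σ * A := by rw [heq]
    · right
      refine ⟨h1, ?_⟩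
      have hv := hA σ
      rw [h1] at hv
      simp only [Units.val_neg, Units.val_one, neg_smul, one_smul] at hv
      have heq : A * ρ σ * A⁻¹ = -(ρ σ) := Units.ext (by rw [Units.val_neg]; exact hv)
      calc A * ρ σ = (A * ρ σ * A⁻¹) * A := by group
        _ = -(ρ σ) * A := by rw [heq]
        _ = -(ρ σ * A) := by rw [neg_mul]
  -- trace of ρ σ is zero when ε σ = -1
  have htrace : ∀ σ : G, ε σ = -1 →
      Matrix.trace ((ρ σ : GL (Fin 2) (ZMod p)) : Matrix (Fin 2) (Fin 2) (ZMod p)) = 0 := by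
    intro σ hσ
    have h1 := hA σ
    rw [hσ] at h1
    simp only [Units.val_neg, Units.val_one, neg_smul, one_smul] at h1
    have h1' : (A : Matrix (Fin 2) (Fin 2) (ZMod p)) * ((ρ σ : GL (Fin 2) (ZMod p)) : Matrix (Fin 2) (Fin 2) (ZMod p)) * ((A⁻¹ : GL (Fin 2) (ZMod p)) : Matrix (Fin 2) (Fin 2) (ZMod p))
        = -(((ρ σ : GL (Fin 2) (ZMod p)) : Matrix (Fin 2) (Fin 2) (ZMod p))) := by
      rw [← Units.val_mul, ← Units.val_mul]
      exact h1
    have ht := Matrix.trace_units_conj A ((ρ σ : GL (Fin 2) (ZMod p)) : Matrix (Fin 2) (Fin 2) (ZMod p))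
    rw [h1', Matrix.trace_neg] at ht
    have h2t : (2:ZMod p) * Matrix.trace ((ρ σ : GL (Fin 2) (ZMod p)) : Matrix (Fin 2) (Fin 2) (ZMod p)) = 0 := by
      linear_combination -ht
    exact (mul_eq_zero.mp h2t).resolve_left h2
  -- the twisting matrix A has trace 0
  obtain ⟨τ, hτ⟩ := hsurj (-1)
  have hAτ : A * ρ τ = -(ρ τ * A) := by
    rcases hsgn τ with ⟨h1, _⟩ | ⟨_, h⟩
    · rw [hτ] at h1
      exact absurd h1.symm hone_ne
    · exact h
  have htrA : Matrix.trace (A : Matrix (Fin 2) (Fin 2) (ZMod p)) = 0 := by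
    have hAc : (ρ τ)⁻¹ * A * ρ τ = -A := by
      calc (ρ τ)⁻¹ * A * ρ τ = (ρ τ)⁻¹ * (A * ρ τ) := by rw [mul_assoc]
        _ = (ρ τ)⁻¹ * -(ρ τ * A) := by rw [hAτ]
        _ = -((ρ τ)⁻¹ * (ρ τ * A)) := by rw [mul_neg]
        _ = -A := by rw [show (ρ τ)⁻¹ * (ρ τ * A) = A by group]
    have hval : (((ρ τ)⁻¹ : GL (Fin 2) (ZMod p)) : Matrix (Fin 2) (Fin 2) (ZMod p))
        * (A : Matrix (Fin 2) (Fin 2) (ZMod p)) * ((ρ τ : GL (Fin 2) (ZMod p)) : Matrix (Fin 2) (Fin 2) (ZMod p))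
        = -((A : Matrix (Fin 2) (Fin 2) (ZMod p))) := by
      rw [← Units.val_mul, ← Units.val_mul, hAc, Units.val_neg]
    have ht := Matrix.trace_units_conj' (ρ τ) (A : Matrix (Fin 2) (Fin 2) (ZMod p))
    rw [hval, Matrix.trace_neg] at ht
    have h2t : (2:ZMod p) * Matrix.trace (A : Matrix (Fin 2) (Fin 2) (ZMod p)) = 0 := by
      linear_combination -ht
    exact (mul_eq_zero.mp h2t).resolve_left h2
  -- A² is the scalar lam = -det A
  have hdet : (A : Matrix (Fin 2) (Fin 2) (ZMod p)).det ≠ 0 :=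
    ((Matrix.isUnit_iff_isUnit_det _).mp (Units.isUnit A)).ne_zero
  have ha2 : (A : Matrix (Fin 2) (Fin 2) (ZMod p)) * (A : Matrix (Fin 2) (Fin 2) (ZMod p))
      = (- (A : Matrix (Fin 2) (Fin 2) (ZMod p)).det) • (1 : Matrix (Fin 2) (Fin 2) (ZMod p)) :=
    aux_CH _ htrA
  -- construct the Cartan subgroup as the centralizer of A
  have hCC : ∃ C : Subgroup (GL (Fin 2) (ZMod p)), IsCartan p C ∧
      ∀ x : GL (Fin 2) (ZMod p), (x ∈ C ↔ Commute x A) := by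
    by_cases hsq : ∃ μ : ZMod p, μ * μ = - (A : Matrix (Fin 2) (Fin 2) (ZMod p)).det
    · obtain ⟨μ, hμ⟩ := hsq
      obtain ⟨g, hg, d, hd, hag⟩ := aux_diagonalize h2 _ htrA hdet μ hμ
      refine ⟨Subgroup.map (MulAut.conj (Matrix.GeneralLinearGroup.mkOfDetNeZero g hg)).toMonoidHom (diagGL p),
        Or.inl ⟨Matrix.GeneralLinearGroup.mkOfDetNeZero g hg, rfl⟩, ?_⟩
      exact aux_split_char A (Matrix.GeneralLinearGroup.mkOfDetNeZero g hg) d hd hag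
    · push_neg at hsq
      have hns : ∀ c : ZMod p, (A : Matrix (Fin 2) (Fin 2) (ZMod p)) ≠ c • (1 : Matrix (Fin 2) (Fin 2) (ZMod p)) := by
        intro c hc
        apply hsq c
        have hcc : (A : Matrix (Fin 2) (Fin 2) (ZMod p)) * (A : Matrix (Fin 2) (Fin 2) (ZMod p))
            = (c * c) • (1 : Matrix (Fin 2) (Fin 2) (ZMod p)) := by
          rw [hc, smul_mul_assoc, mul_smul_comm, one_mul, smul_smul]
        rw [ha2] at hcc
        have := congrFun (congrFun hcc 0) 0
        simpa [Matrix.one_apply] using this.symm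
      have hb : (A : Matrix (Fin 2) (Fin 2) (ZMod p)) 0 1 ≠ 0 ∨ (A : Matrix (Fin 2) (Fin 2) (ZMod p)) 1 0 ≠ 0 := by
        by_contra hcon
        push_neg at hcon
        obtain ⟨hb1, hb2⟩ := hcon
        apply hsq ((A : Matrix (Fin 2) (Fin 2) (ZMod p)) 0 0)
        have h00 := congrFun (congrFun ha2 0) 0
        simp [Matrix.mul_apply, Fin.sum_univ_two, hb1, Matrix.one_apply] at h00
        linear_combination h00
      refine ⟨unitsIn p (spanAlg _ _ ha2),
        Or.inr ⟨spanAlg _ _ ha2, spanAlg_isField _ _ ha2 hsq, ?_, rfl⟩,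
        aux_nonsplit_char A _ ha2 htrA hb⟩
      rw [← Nat.card_congr (spanAlgEquiv _ _ ha2 hns), Nat.card_prod, Nat.card_zmod, sq]
  obtain ⟨C, hCartan, hC⟩ := hCC
  refine ⟨htrace, C, hCartan, ?_, ?_⟩
  · rintro x ⟨σ, rfl⟩
    rw [Subgroup.mem_normalizer_iff]
    intro h
    rw [hC, hC]
    refine aux_norm_helper (ρ σ) A h ?_
    rcases hsgn σ with ⟨_, h'⟩ | ⟨_, h'⟩
    exacts [Or.inl h', Or.inr h']
  · ext x
    simp only [Subgroup.mem_inf, MonoidHom.mem_range, Subgroup.mem_map, MonoidHom.mem_ker]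
    constructor
    · rintro ⟨⟨σ, rfl⟩, hxC⟩
      refine ⟨σ, ?_, rfl⟩
      rcases hsgn σ with ⟨h1, _⟩ | ⟨h1, hanti⟩
      · exact h1
      · exfalso
        have hcomm : ρ σ * A = A * ρ σ := (hC _).mp hxC
        have hneg : A * ρ σ = -(A * ρ σ) := by
          calc A * ρ σ = -(ρ σ * A) := hanti
            _ = -(A * ρ σ) := by rw [hcomm]
        have hval := congrArg Units.val hneg
        rw [Units.val_neg] at hval
        have hzero : ((A * ρ σ : GL (Fin 2) (ZMod p)) : Matrix (Fin 2) (Fin 2) (ZMod p)) = 0 := by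
          have h2s : (2:ZMod p) • ((A * ρ σ : GL (Fin 2) (ZMod p)) : Matrix (Fin 2) (Fin 2) (ZMod p)) = 0 := by
            rw [two_smul]
            exact eq_neg_iff_add_eq_zero.mp hval
          exact (smul_eq_zero.mp h2s).resolve_left h2
        have hone : (1 : Matrix (Fin 2) (Fin 2) (ZMod p))
            = ((A * ρ σ : GL (Fin 2) (ZMod p)) : Matrix (Fin 2) (Fin 2) (ZMod p))
              * (((A * ρ σ)⁻¹ : GL (Fin 2) (ZMod p)) : Matrix (Fin 2) (Fin 2) (ZMod p)) := by
          rw [← Units.val_mul, mul_inv_cancel, Units.val_one]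
        rw [hzero, zero_mul] at hone
        have h10 := congrFun (congrFun hone 0) 0
        rw [Matrix.one_apply_eq, Matrix.zero_apply] at h10
        exact one_ne_zero h10
    · rintro ⟨σ, hσ, rfl⟩
      refine ⟨⟨σ, rfl⟩, (hC _).mpr ?_⟩
      rcases hsgn σ with ⟨_, hcomm⟩ | ⟨h1, _⟩
      · exact hcomm.symm
      · rw [hσ] at h1
        exact absurd h1 hone_ne
end

section
/- Let p be an odd prime, G a group, and ρ : G → GL₂(𝔽_p) a homomorphism. Let C be a Cartan subgroup of GL₂(𝔽_p) with normalizer N in GL₂(𝔽_p), and suppose ρ(G) ⊆ N but ρ(G) ⊄ C. Then the map ε : G → {±1} defined by ε(σ) = 1 if ρ(σ) ∈ C and ε(σ) = −1 otherwise is a group homomorphism, and there exists a matrix A ∈ GL₂(𝔽_p) such that A·ρ(σ)·A⁻¹ = ε(σ)·ρ(σ) for all σ ∈ G. -/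
open Matrix

/-!
Statement 9: if `ρ : G → GL₂(𝔽_p)` has image contained in the normalizer `N` of a
Cartan subgroup `C` but not in `C` itself, then the map `ε : G → {±1}` which is `1`
on preimages of `C` and `−1` otherwise is a homomorphism, and there is a matrix
`A ∈ GL₂(𝔽_p)` with `A·ρ(σ)·A⁻¹ = ε(σ)·ρ(σ)` for all `σ ∈ G`.
-/

set_option maxHeartbeats 1000000

def CartanKey (p : ℕ) (C : Subgroup (GL (Fin 2) (ZMod p))) : Prop :=
  ∃ A : GL (Fin 2) (ZMod p),
    (∀ g ∈ C, A * g * A⁻¹ = g) ∧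
    (∀ g ∈ Subgroup.normalizer (C : Set (GL (Fin 2) (ZMod p))), g ∉ C →
      ((A * g * A⁻¹ : GL (Fin 2) (ZMod p)) : Matrix (Fin 2) (Fin 2) (ZMod p)) =
        -(g : Matrix (Fin 2) (Fin 2) (ZMod p)))

lemma two_ne (p : ℕ) [Fact p.Prime] (hp : Odd p) : (2 : ZMod p) ≠ 0 := by
  intro h
  have h2 : ((2 : ℕ) : ZMod p) = 0 := by exact_mod_cast h
  have hdvd : p ∣ 2 := (ZMod.natCast_eq_zero_iff 2 p).1 h2
  have : p = 2 := ((Nat.prime_dvd_prime_iff_eq (Fact.out) Nat.prime_two).1 hdvd)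
  rw [this] at hp
  exact (Nat.not_odd_iff_even.2 (by norm_num)) hp

lemma cent_fin_two {K : Type*} [Field K] (u m : Matrix (Fin 2) (Fin 2) K)
    (hu : ∀ α : K, u ≠ α • (1 : Matrix (Fin 2) (Fin 2) K))
    (hcomm : m * u = u * m) :
    ∃ α β : K, m = α • (1 : Matrix (Fin 2) (Fin 2) K) + β • u := by
  have E : ∀ i j, (m * u) i j = (u * m) i j := fun i j => by rw [hcomm]
  have E00 := E 0 0; have E01 := E 0 1; have E10 := E 1 0; have E11 := E 1 1
  simp only [Matrix.mul_apply, Fin.sum_univ_two] at E00 E01 E10 E11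
  by_cases hb0 : u 0 1 ≠ 0
  · refine ⟨m 0 0 - u 0 0 * m 0 1 / u 0 1, m 0 1 / u 0 1, ?_⟩
    ext i j
    fin_cases i <;> fin_cases j <;> simp only [Matrix.add_apply, Matrix.smul_apply,
      Matrix.one_apply, smul_eq_mul] <;> norm_num <;> field_simp <;>
      first
        | ring1
        | linear_combination E00 | linear_combination -E00
        | linear_combination E01 | linear_combination -E01
        | linear_combination 2*E00 | linear_combination -2*E00
        | linear_combination 2*E01 | linear_combination -2*E01
  · push_neg at hb0
    by_cases hc0 : u 1 0 ≠ 0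
    · refine ⟨m 1 1 - u 1 1 * m 1 0 / u 1 0, m 1 0 / u 1 0, ?_⟩
      ext i j
      fin_cases i <;> fin_cases j <;> simp only [Matrix.add_apply, Matrix.smul_apply,
        Matrix.one_apply, smul_eq_mul] <;> norm_num <;> field_simp <;>
        first
          | ring1
          | linear_combination E10 | linear_combination -E10
          | linear_combination E11 | linear_combination -E11
          | linear_combination 2*E10 | linear_combination -2*E10
          | linear_combination 2*E11 | linear_combination -2*E11
    · push_neg at hc0
      by_cases had : u 0 0 = u 1 1
      · exact absurd (by ext i j; fin_cases i <;> fin_cases j <;>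
          simp [Matrix.one_apply, hb0, hc0, had]) (hu (u 0 0))
      · have hsub : u 1 1 - u 0 0 ≠ 0 := sub_ne_zero.2 (fun h => had h.symm)
        have hf : m 0 1 = 0 := by
          have h1 : m 0 1 * (u 1 1 - u 0 0) = 0 := by
            linear_combination E01 - m 0 0 * hb0 + m 1 1 * hb0
          rcases mul_eq_zero.1 h1 with h' | h'
          · exact h'
          · exact absurd h' hsub
        have hg : m 1 0 = 0 := by
          have h1 : m 1 0 * (u 1 1 - u 0 0) = 0 := by
            linear_combination -E10 - m 0 0 * hc0 + m 1 1 * hc0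
          rcases mul_eq_zero.1 h1 with h' | h'
          · exact h'
          · exact absurd h' hsub
        refine ⟨m 0 0 - (m 1 1 - m 0 0) / (u 1 1 - u 0 0) * u 0 0,
          (m 1 1 - m 0 0) / (u 1 1 - u 0 0), ?_⟩
        ext i j
        fin_cases i <;> fin_cases j <;> simp only [Matrix.add_apply, Matrix.smul_apply,
          Matrix.one_apply, smul_eq_mul, hf, hg] <;> norm_num <;> field_simp <;>
          first
            | ring1
            | linear_combination (u 1 1 - u 0 0) * hf - (m 1 1 - m 0 0) * hb0
            | linear_combination -(u 1 1 - u 0 0) * hf + (m 1 1 - m 0 0) * hb0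
            | linear_combination (u 1 1 - u 0 0) * hg - (m 1 1 - m 0 0) * hc0
            | linear_combination -(u 1 1 - u 0 0) * hg + (m 1 1 - m 0 0) * hc0
            | linear_combination (m 1 1 - m 0 0) * hb0 | linear_combination -(m 1 1 - m 0 0) * hb0
            | linear_combination (m 1 1 - m 0 0) * hc0 | linear_combination -(m 1 1 - m 0 0) * hc0

lemma sq_fin_two {K : Type*} [CommRing K] (m : Matrix (Fin 2) (Fin 2) K) :
    m * m = m.trace • m - m.det • (1 : Matrix (Fin 2) (Fin 2) K) := by
  ext i j
  fin_cases i <;> fin_cases j <;>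
    simp [Matrix.mul_apply, Matrix.trace_fin_two, Matrix.det_fin_two, Fin.sum_univ_two,
      Matrix.one_apply] <;> ring

lemma key_diag (p : ℕ) [Fact p.Prime] (hp : Odd p) : CartanKey p (diagGL p) := by
  have h2 : (2 : ZMod p) ≠ 0 := two_ne p hp
  set w : Fin 2 → ZMod p := ![1, -1] with hw
  set d : Matrix (Fin 2) (Fin 2) (ZMod p) := Matrix.diagonal w with hdm
  have hdd : d * d = 1 := by
    ext i j
    rw [hdm]
    fin_cases i <;> fin_cases j <;>
      simp [Matrix.mul_apply, Matrix.diagonal, Matrix.one_apply, Fin.sum_univ_two, hw]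
  refine ⟨⟨d, d, hdd, hdd⟩, ?_, ?_⟩
  · rintro g ⟨v, hv⟩
    apply Units.ext
    show d * (g : Matrix (Fin 2) (Fin 2) (ZMod p)) * d = (g : Matrix (Fin 2) (Fin 2) (ZMod p))
    rw [hv, hdm]
    ext i j
    fin_cases i <;> fin_cases j <;>
      simp [Matrix.mul_apply, Matrix.diagonal, Fin.sum_univ_two, hw]
  · intro g hgN hgC
    set M := (g : Matrix (Fin 2) (Fin 2) (ZMod p)) with hMdef
    have hdet : M.det ≠ 0 := by
      have : IsUnit M.det := (Matrix.isUnit_iff_isUnit_det _).1 ⟨g, rfl⟩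
      exact this.ne_zero
    rw [Matrix.det_fin_two] at hdet
    have hD : (⟨d, d, hdd, hdd⟩ : GL (Fin 2) (ZMod p)) ∈ diagGL p := ⟨w, rfl⟩
    obtain ⟨v, hv⟩ := (Subgroup.mem_normalizer_iff.1 hgN _).1 hD
    have hM : M * d = Matrix.diagonal v * M := by
      have h1 : M * d * ((g⁻¹ : GL (Fin 2) (ZMod p)) : Matrix (Fin 2) (Fin 2) (ZMod p)) =
          Matrix.diagonal v := by rw [← hv]; rfl
      have h2' : ((g⁻¹ : GL (Fin 2) (ZMod p)) : Matrix (Fin 2) (Fin 2) (ZMod p)) * M = 1 := by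
        rw [hMdef, ← Units.val_mul, inv_mul_cancel]; rfl
      calc M * d = M * d * (((g⁻¹ : GL (Fin 2) (ZMod p)) : Matrix _ _ _) * M) := by
            rw [h2', mul_one]
        _ = Matrix.diagonal v * M := by rw [← mul_assoc, h1]
    have Eq : ∀ i j, M i j * w j = v i * M i j := by
      intro i j
      have := congrFun (congrFun hM i) j
      rwa [hdm, Matrix.mul_diagonal, Matrix.diagonal_mul] at this
    have E00 := Eq 0 0; have E01 := Eq 0 1; have E10 := Eq 1 0; have E11 := Eq 1 1
    simp only [hw] at E00 E01 E10 E11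
    norm_num at E00 E01 E10 E11
    by_cases h00 : M 0 0 = 0
    · -- antidiagonal case
      have h01 : M 0 1 ≠ 0 := fun h => hdet (by rw [h00, h]; ring)
      have h10 : M 1 0 ≠ 0 := fun h => hdet (by rw [h00, h]; ring)
      have hv0 : v 0 = -1 := by
        rcases mul_eq_zero.1 (show (v 0 + 1) * M 0 1 = 0 by linear_combination -E01) with h' | h'
        · linear_combination h'
        · exact absurd h' h01
      have hv1 : v 1 = 1 := by
        rcases mul_eq_zero.1 (show (v 1 - 1) * M 1 0 = 0 by linear_combination -E10) with h' | h'
        · linear_combination h'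
        · exact absurd h' h10
      have h11 : M 1 1 = 0 := by
        rcases mul_eq_zero.1 (show (2 : ZMod p) * M 1 1 = 0 by
          linear_combination -E11 - M 1 1 * hv1) with h' | h'
        · exact absurd h' h2
        · exact h'
      show d * M * d = -M
      rw [hdm]
      ext i j
      fin_cases i <;> fin_cases j <;>
        simp [Matrix.mul_apply, Matrix.diagonal, Fin.sum_univ_two, hw, h00, h11]
    · -- diagonal case: contradiction
      exfalso
      have hv0 : v 0 = 1 := by
        rcases mul_eq_zero.1 (show (v 0 - 1) * M 0 0 = 0 by linear_combination -E00) with h' | h'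
        · linear_combination h'
        · exact absurd h' h00
      have h01 : M 0 1 = 0 := by
        rcases mul_eq_zero.1 (show (2 : ZMod p) * M 0 1 = 0 by
          linear_combination -E01 - M 0 1 * hv0) with h' | h'
        · exact absurd h' h2
        · exact h'
      have h11 : M 1 1 ≠ 0 := fun h => hdet (by rw [h01, h]; ring)
      have hv1 : v 1 = -1 := by
        rcases mul_eq_zero.1 (show (v 1 + 1) * M 1 1 = 0 by linear_combination -E11) with h' | h'
        · linear_combination h'
        · exact absurd h' h11
      have h10 : M 1 0 = 0 := by
        rcases mul_eq_zero.1 (show (2 : ZMod p) * M 1 0 = 0 by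
          linear_combination E10 + M 1 0 * hv1) with h' | h'
        · exact absurd h' h2
        · exact h'
      exact hgC ⟨![M 0 0, M 1 1], by
        ext i j
        fin_cases i <;> fin_cases j <;> simp [Matrix.diagonal, h01, h10, ← hMdef]⟩

lemma mem_conj_map {Γ : Type*} [Group Γ] (h : Γ) (S : Subgroup Γ) (x : Γ) :
    x ∈ Subgroup.map (MulAut.conj h).toMonoidHom S ↔ h⁻¹ * x * h ∈ S := by
  rw [Subgroup.mem_map_equiv]
  simp [MulAut.conj_symm_apply]

lemma normalizer_conj_map {Γ : Type*} [Group Γ] (h : Γ) (S : Subgroup Γ) (x : Γ) :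
    x ∈ Subgroup.normalizer ((Subgroup.map (MulAut.conj h).toMonoidHom S : Subgroup Γ) : Set Γ) ↔
      h⁻¹ * x * h ∈ Subgroup.normalizer (S : Set Γ) := by
  simp only [Subgroup.mem_normalizer_iff]
  constructor
  · intro H y
    have H' := H (h * y * h⁻¹)
    rw [mem_conj_map, mem_conj_map, show h⁻¹ * (h * y * h⁻¹) * h = y from by group,
      show h⁻¹ * (x * (h * y * h⁻¹) * x⁻¹) * h = (h⁻¹ * x * h) * y * (h⁻¹ * x * h)⁻¹ from by
        group] at H'
    exact H'
  · intro H y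
    rw [mem_conj_map, mem_conj_map]
    have H' := H (h⁻¹ * y * h)
    rw [show h⁻¹ * x * h * (h⁻¹ * y * h) * (h⁻¹ * x * h)⁻¹ = h⁻¹ * (x * y * x⁻¹) * h from by
      group] at H'
    exact H'

lemma key_conj (p : ℕ) (C : Subgroup (GL (Fin 2) (ZMod p))) (h : GL (Fin 2) (ZMod p))
    (hk : CartanKey p C) : CartanKey p (Subgroup.map (MulAut.conj h).toMonoidHom C) := by
  obtain ⟨A, hA1, hA2⟩ := hk
  refine ⟨h * A * h⁻¹, ?_, ?_⟩
  · intro g hg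
    rw [mem_conj_map] at hg
    have := hA1 _ hg
    have expand : (h * A * h⁻¹) * g * (h * A * h⁻¹)⁻¹ =
        h * (A * (h⁻¹ * g * h) * A⁻¹) * h⁻¹ := by group
    rw [expand, this]
    group
  · intro g hgN hgC
    rw [normalizer_conj_map] at hgN
    rw [mem_conj_map] at hgC
    have key := hA2 _ hgN hgC
    have expand : (h * A * h⁻¹) * g * (h * A * h⁻¹)⁻¹ =
        h * (A * (h⁻¹ * g * h) * A⁻¹) * h⁻¹ := by group
    rw [expand]
    have : ((h * (A * (h⁻¹ * g * h) * A⁻¹) * h⁻¹ : GL (Fin 2) (ZMod p)) :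
        Matrix (Fin 2) (Fin 2) (ZMod p)) =
        (h : Matrix _ _ _) * ((A * (h⁻¹ * g * h) * A⁻¹ : GL (Fin 2) (ZMod p)) : Matrix _ _ _) *
          ((h⁻¹ : GL (Fin 2) (ZMod p)) : Matrix _ _ _) := by
      simp [Units.val_mul]
    rw [this, key]
    have expand2 : ((g : GL (Fin 2) (ZMod p)) : Matrix (Fin 2) (Fin 2) (ZMod p)) =
        (h : Matrix _ _ _) * (((h⁻¹ * g * h : GL (Fin 2) (ZMod p))) : Matrix _ _ _) *
          ((h⁻¹ : GL (Fin 2) (ZMod p)) : Matrix _ _ _) := by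
      simp [Units.val_mul, ← mul_assoc]
    rw [mul_neg, neg_mul, expand2]

lemma key_nonsplit (p : ℕ) [Fact p.Prime] (hp : Odd p)
    (A : Subalgebra (ZMod p) (Matrix (Fin 2) (Fin 2) (ZMod p)))
    (hF : IsField A) (hcard : Nat.card A = p ^ 2) :
    CartanKey p (unitsIn p A) := by
  classical
  have h2 : (2 : ZMod p) ≠ 0 := two_ne p hp
  letI : Field A := hF.toField
  have hp1 : 1 < p := (Fact.out : p.Prime).one_lt
  -- there is a non-scalar element of A
  have hx : ∃ x : A, ∀ c : ZMod p, (x : Matrix (Fin 2) (Fin 2) (ZMod p)) ≠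
      c • (1 : Matrix (Fin 2) (Fin 2) (ZMod p)) := by
    by_contra hcon
    push_neg at hcon
    have hsurj : Function.Surjective (algebraMap (ZMod p) A) := by
      intro x
      obtain ⟨c, hc⟩ := hcon x
      refine ⟨c, ?_⟩
      apply Subtype.ext
      rw [hc]
      simp [Algebra.algebraMap_eq_smul_one]
    have hinj : Function.Injective (algebraMap (ZMod p) A) :=
      (algebraMap (ZMod p) A).injective
    have hbij : Function.Bijective (algebraMap (ZMod p) A) := ⟨hinj, hsurj⟩
    have := Nat.card_eq_of_bijective _ hbij
    rw [Nat.card_eq_fintype_card, ZMod.card] at this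
    rw [← this] at hcard
    nlinarith [hcard]
  obtain ⟨x, hx⟩ := hx
  set X : Matrix (Fin 2) (Fin 2) (ZMod p) := (x : Matrix (Fin 2) (Fin 2) (ZMod p)) with hX
  set t : ZMod p := X.trace with ht
  set n : ZMod p := X.det with hn
  set u : Matrix (Fin 2) (Fin 2) (ZMod p) :=
    (2 : ZMod p) • X - t • (1 : Matrix (Fin 2) (Fin 2) (ZMod p)) with hu
  have huA : u ∈ A := by
    rw [hu]
    exact A.sub_mem (A.smul_mem x.2 _) (A.smul_mem A.one_mem _)
  have hCH : X * X = t • X - n • (1 : Matrix (Fin 2) (Fin 2) (ZMod p)) := sq_fin_two X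
  set d : ZMod p := t ^ 2 - 4 * n with hd
  have huu : u * u = d • (1 : Matrix (Fin 2) (Fin 2) (ZMod p)) := by
    ext i j
    fin_cases i <;> fin_cases j <;>
      simp [hu, ht, hn, hd, Matrix.mul_apply, Matrix.trace_fin_two, Matrix.det_fin_two,
        Fin.sum_univ_two, Matrix.one_apply] <;> ring
  -- u is not a scalar
  have hunons : ∀ c : ZMod p, u ≠ c • (1 : Matrix (Fin 2) (Fin 2) (ZMod p)) := by
    intro c hc
    apply hx ((c + t) * 2⁻¹)
    rw [hu] at hc
    have h21 : (2⁻¹ : ZMod p) * 2 = 1 := inv_mul_cancel₀ h2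
    have hc' : (2 : ZMod p) • X = c • (1 : Matrix (Fin 2) (Fin 2) (ZMod p)) + t • 1 :=
      sub_eq_iff_eq_add.mp hc
    calc X = (2⁻¹ * 2 : ZMod p) • X := by rw [h21, one_smul]
      _ = (2⁻¹ : ZMod p) • ((2 : ZMod p) • X) := (smul_smul _ _ _).symm
      _ = (2⁻¹ : ZMod p) • (c • (1 : Matrix (Fin 2) (Fin 2) (ZMod p)) + t • 1) := by rw [hc']
      _ = ((c + t) * 2⁻¹) • (1 : Matrix (Fin 2) (Fin 2) (ZMod p)) := by module
  -- d is not a square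
  have hdns : ∀ e : ZMod p, d ≠ e ^ 2 := by
    intro e he
    set uA : A := ⟨u, huA⟩ with huAdef
    have hsq : (uA - algebraMap (ZMod p) A e) * (uA + algebraMap (ZMod p) A e) = 0 := by
      have h1 : (uA - algebraMap (ZMod p) A e) * (uA + algebraMap (ZMod p) A e) =
          uA * uA - algebraMap (ZMod p) A e * algebraMap (ZMod p) A e := by ring
      rw [h1]
      apply Subtype.ext
      have hval : ((uA * uA - algebraMap (ZMod p) A e * algebraMap (ZMod p) A e : A) :
          Matrix (Fin 2) (Fin 2) (ZMod p)) = u * u - (e • 1) * (e • 1) := by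
        push_cast
        simp [Algebra.algebraMap_eq_smul_one]
        rfl
      rw [hval, huu, he]
      simp [Matrix.smul_mul, Matrix.mul_smul, smul_smul]
      module
    rcases mul_eq_zero.1 hsq with h' | h'
    · have : uA = algebraMap (ZMod p) A e := sub_eq_zero.1 h'
      have hval := congrArg Subtype.val this
      apply hunons e
      rw [show ((uA : A) : Matrix (Fin 2) (Fin 2) (ZMod p)) = u from rfl] at hval
      rw [hval]
      simp [Algebra.algebraMap_eq_smul_one]
    · have : uA = -algebraMap (ZMod p) A e := eq_neg_of_add_eq_zero_left h'
      have hval := congrArg Subtype.val this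
      apply hunons (-e)
      rw [show ((uA : A) : Matrix (Fin 2) (Fin 2) (ZMod p)) = u from rfl] at hval
      rw [hval]
      push_cast
      simp [Algebra.algebraMap_eq_smul_one]
  have hd0 : d ≠ 0 := fun h => hdns 0 (by rw [h]; ring)
  -- the unit U with value u
  have hud : u * (d⁻¹ • u) = 1 := by
    rw [Matrix.mul_smul, huu, smul_smul, inv_mul_cancel₀ hd0, one_smul]
  have hdu : (d⁻¹ • u) * u = 1 := by
    rw [Matrix.smul_mul, huu, smul_smul, inv_mul_cancel₀ hd0, one_smul]
  refine ⟨⟨u, d⁻¹ • u, hud, hdu⟩, ?_, ?_⟩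
  · rintro g ⟨hg1, hg2⟩
    have hcomm : (g : Matrix (Fin 2) (Fin 2) (ZMod p)) * u = u * g := by
      have h1 := mul_comm (⟨(g : Matrix (Fin 2) (Fin 2) (ZMod p)), hg1⟩ : A) ⟨u, huA⟩
      have := congrArg Subtype.val h1
      simpa using this
    apply Units.ext
    show u * (g : Matrix (Fin 2) (Fin 2) (ZMod p)) * (d⁻¹ • u) = g
    rw [← hcomm, mul_assoc, hud, mul_one]
  · intro g hgN hgC
    have hgi : ((g⁻¹ : GL (Fin 2) (ZMod p)) : Matrix (Fin 2) (Fin 2) (ZMod p)) *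
        (g : Matrix (Fin 2) (Fin 2) (ZMod p)) = 1 := by
      rw [← Units.val_mul, inv_mul_cancel]; rfl
    have hig : (g : Matrix (Fin 2) (Fin 2) (ZMod p)) *
        ((g⁻¹ : GL (Fin 2) (ZMod p)) : Matrix (Fin 2) (Fin 2) (ZMod p)) = 1 := by
      rw [← Units.val_mul, mul_inv_cancel]; rfl
    have hu0 : u ≠ 0 := fun h => hunons 0 (by rw [h, zero_smul])
    have huA0 : (⟨u, huA⟩ : A) ≠ 0 := fun h => hu0 (congrArg Subtype.val h)
    obtain ⟨v, hv⟩ := hF.mul_inv_cancel huA0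
    have huv : u * (v : Matrix (Fin 2) (Fin 2) (ZMod p)) = 1 := by
      have := congrArg Subtype.val hv; simpa using this
    have hvu : (v : Matrix (Fin 2) (Fin 2) (ZMod p)) * u = 1 := by
      have h1 : (v * ⟨u, huA⟩ : A) = 1 := by rw [mul_comm]; exact hv
      have := congrArg Subtype.val h1; simpa using this
    have hgUC : (⟨u, v, huv, hvu⟩ : GL (Fin 2) (ZMod p)) ∈ unitsIn p A := ⟨huA, v.2⟩
    have hwC := (Subgroup.mem_normalizer_iff.1 hgN _).1 hgUC
    have pw : (g : Matrix (Fin 2) (Fin 2) (ZMod p)) * u *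
        ((g⁻¹ : GL (Fin 2) (ZMod p)) : Matrix (Fin 2) (Fin 2) (ZMod p)) ∈ A := by
      have := hwC.1
      rwa [Units.val_mul, Units.val_mul] at this
    set w : Matrix (Fin 2) (Fin 2) (ZMod p) := (g : Matrix (Fin 2) (Fin 2) (ZMod p)) * u *
      ((g⁻¹ : GL (Fin 2) (ZMod p)) : Matrix (Fin 2) (Fin 2) (ZMod p)) with hwdef
    have hww : w * w = d • (1 : Matrix (Fin 2) (Fin 2) (ZMod p)) := by
      have e1 : w * w = (g : Matrix (Fin 2) (Fin 2) (ZMod p)) * u *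
          (((g⁻¹ : GL (Fin 2) (ZMod p)) : Matrix (Fin 2) (Fin 2) (ZMod p)) *
            (g : Matrix (Fin 2) (Fin 2) (ZMod p))) * u *
          ((g⁻¹ : GL (Fin 2) (ZMod p)) : Matrix (Fin 2) (Fin 2) (ZMod p)) := by
        rw [hwdef]; noncomm_ring
      rw [e1, hgi, mul_one, mul_assoc (g : Matrix (Fin 2) (Fin 2) (ZMod p)) u u, huu]
      rw [Matrix.mul_smul, mul_one, Matrix.smul_mul, hig]
    have hwA : w ∈ A := pw
    have hsqA : (⟨w, hwA⟩ * ⟨w, hwA⟩ : A) = ⟨u, huA⟩ * ⟨u, huA⟩ := by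
      apply Subtype.ext
      push_cast
      rw [hww, huu]
    have hfac : ((⟨w, hwA⟩ : A) - ⟨u, huA⟩) * ((⟨w, hwA⟩ : A) + ⟨u, huA⟩) = 0 := by
      have h1 : ((⟨w, hwA⟩ : A) - ⟨u, huA⟩) * ((⟨w, hwA⟩ : A) + ⟨u, huA⟩) =
          (⟨w, hwA⟩ * ⟨w, hwA⟩ : A) - ⟨u, huA⟩ * ⟨u, huA⟩ := by ring
      rw [h1, hsqA]; ring
    rcases mul_eq_zero.1 hfac with h' | h'
    · -- w = u : then g would be in C, contradiction
      exfalso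
      have hwu : w = u := congrArg Subtype.val (sub_eq_zero.1 h')
      have hgu : (g : Matrix (Fin 2) (Fin 2) (ZMod p)) * u = u * g := by
        calc (g : Matrix (Fin 2) (Fin 2) (ZMod p)) * u
            = (g : Matrix (Fin 2) (Fin 2) (ZMod p)) * u *
              (((g⁻¹ : GL (Fin 2) (ZMod p)) : Matrix (Fin 2) (Fin 2) (ZMod p)) * g) := by
              rw [hgi, mul_one]
          _ = w * g := by rw [hwdef]; noncomm_ring
          _ = u * g := by rw [hwu]
      obtain ⟨α, β, hαβ⟩ := cent_fin_two u (g : Matrix (Fin 2) (Fin 2) (ZMod p)) hunons hgu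
      have hgiu : ((g⁻¹ : GL (Fin 2) (ZMod p)) : Matrix (Fin 2) (Fin 2) (ZMod p)) * u =
          u * ((g⁻¹ : GL (Fin 2) (ZMod p)) : Matrix (Fin 2) (Fin 2) (ZMod p)) := by
        calc ((g⁻¹ : GL (Fin 2) (ZMod p)) : Matrix (Fin 2) (Fin 2) (ZMod p)) * u
            = ((g⁻¹ : GL (Fin 2) (ZMod p)) : Matrix (Fin 2) (Fin 2) (ZMod p)) * u *
              ((g : Matrix (Fin 2) (Fin 2) (ZMod p)) *
                ((g⁻¹ : GL (Fin 2) (ZMod p)) : Matrix (Fin 2) (Fin 2) (ZMod p))) := by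
              rw [hig, mul_one]
          _ = ((g⁻¹ : GL (Fin 2) (ZMod p)) : Matrix (Fin 2) (Fin 2) (ZMod p)) *
              ((u * (g : Matrix (Fin 2) (Fin 2) (ZMod p))) *
                ((g⁻¹ : GL (Fin 2) (ZMod p)) : Matrix (Fin 2) (Fin 2) (ZMod p))) := by
              noncomm_ring
          _ = ((g⁻¹ : GL (Fin 2) (ZMod p)) : Matrix (Fin 2) (Fin 2) (ZMod p)) *
              (((g : Matrix (Fin 2) (Fin 2) (ZMod p)) * u) *
                ((g⁻¹ : GL (Fin 2) (ZMod p)) : Matrix (Fin 2) (Fin 2) (ZMod p))) := by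
              rw [hgu]
          _ = (((g⁻¹ : GL (Fin 2) (ZMod p)) : Matrix (Fin 2) (Fin 2) (ZMod p)) *
              (g : Matrix (Fin 2) (Fin 2) (ZMod p))) * u *
                ((g⁻¹ : GL (Fin 2) (ZMod p)) : Matrix (Fin 2) (Fin 2) (ZMod p)) := by
              noncomm_ring
          _ = u * ((g⁻¹ : GL (Fin 2) (ZMod p)) : Matrix (Fin 2) (Fin 2) (ZMod p)) := by
              rw [hgi, one_mul]
      obtain ⟨α', β', hαβ'⟩ := cent_fin_two u
        ((g⁻¹ : GL (Fin 2) (ZMod p)) : Matrix (Fin 2) (Fin 2) (ZMod p)) hunons hgiu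
      refine hgC ⟨?_, ?_⟩
      · rw [hαβ]
        exact A.add_mem (A.smul_mem A.one_mem _) (A.smul_mem huA _)
      · rw [hαβ']
        exact A.add_mem (A.smul_mem A.one_mem _) (A.smul_mem huA _)
    · -- w = -u : conjugation by u negates g
      have hwu : w = -u := by
        have h1 : (⟨w, hwA⟩ : A) = -⟨u, huA⟩ := eq_neg_of_add_eq_zero_left h'
        have := congrArg Subtype.val h1
        simpa using this
      have hug : u * (g : Matrix (Fin 2) (Fin 2) (ZMod p)) =
          -((g : Matrix (Fin 2) (Fin 2) (ZMod p)) * u) := by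
        have h1 : (g : Matrix (Fin 2) (Fin 2) (ZMod p)) * u = -u * g := by
          calc (g : Matrix (Fin 2) (Fin 2) (ZMod p)) * u
              = w * g := by
                rw [hwdef, mul_assoc, mul_assoc, hgi, mul_one]
            _ = -u * g := by rw [hwu]
        rw [neg_mul] at h1
        calc u * (g : Matrix (Fin 2) (Fin 2) (ZMod p))
            = -(-(u * (g : Matrix (Fin 2) (Fin 2) (ZMod p)))) := by rw [neg_neg]
          _ = -((g : Matrix (Fin 2) (Fin 2) (ZMod p)) * u) := by rw [← h1]
      show u * (g : Matrix (Fin 2) (Fin 2) (ZMod p)) * (d⁻¹ • u) =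
        -(g : Matrix (Fin 2) (Fin 2) (ZMod p))
      rw [hug, neg_mul, Matrix.mul_smul, mul_assoc, huu, Matrix.mul_smul, mul_one,
        smul_smul, inv_mul_cancel₀ hd0, one_smul]


lemma key_of_cartan (p : ℕ) [Fact p.Prime] (hp : Odd p) (C : Subgroup (GL (Fin 2) (ZMod p)))
    (hC : IsCartan p C) : CartanKey p C := by
  rcases hC with ⟨g, rfl⟩ | ⟨A, hF, hcard, rfl⟩
  · exact key_conj p _ g (key_diag p hp)
  · exact key_nonsplit p hp A hF hcard

lemma pm_cast (p : ℕ) [Fact p.Prime] (hp : Odd p) {a b : ℤ} (ha : a = 1 ∨ a = -1)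
    (hb : b = 1 ∨ b = -1) (h : ((a : ℤ) : ZMod p) = ((b : ℤ) : ZMod p)) : a = b := by
  rcases ha with rfl | rfl <;> rcases hb with rfl | rfl <;>
    first
      | rfl
      | (exfalso; apply two_ne p hp; push_cast at h; linear_combination h)
      | (exfalso; apply two_ne p hp; push_cast at h; linear_combination -h)

theorem twist_self_of_in_normalizer_of_cartan (p : ℕ) [Fact p.Prime] (hp : Odd p)
    {G : Type*} [Group G] (ρ : G →* GL (Fin 2) (ZMod p))
    (C : Subgroup (GL (Fin 2) (ZMod p))) (hC : IsCartan p C)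
    (hin : ρ.range ≤ Subgroup.normalizer (C : Set (GL (Fin 2) (ZMod p)))) (hout : ¬ ρ.range ≤ C)
    (ε : G → ℤ)
    (hε : ∀ σ : G, (ρ σ ∈ C → ε σ = 1) ∧ (ρ σ ∉ C → ε σ = -1)) :
    (∀ σ τ : G, ε (σ * τ) = ε σ * ε τ) ∧
    ∃ A : GL (Fin 2) (ZMod p), ∀ σ : G,
      ((A * ρ σ * A⁻¹ : GL (Fin 2) (ZMod p)) : Matrix (Fin 2) (Fin 2) (ZMod p)) =
        ε σ • ((ρ σ : GL (Fin 2) (ZMod p)) : Matrix (Fin 2) (Fin 2) (ZMod p)) := by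
  obtain ⟨A, hA1, hA2⟩ := key_of_cartan p hp C hC
  have hval : ∀ σ : G,
      ((A * ρ σ * A⁻¹ : GL (Fin 2) (ZMod p)) : Matrix (Fin 2) (Fin 2) (ZMod p)) =
        ε σ • ((ρ σ : GL (Fin 2) (ZMod p)) : Matrix (Fin 2) (Fin 2) (ZMod p)) := by
    intro σ
    by_cases h : ρ σ ∈ C
    · rw [(hε σ).1 h, one_smul, hA1 _ h]
    · rw [(hε σ).2 h, hA2 _ (hin ⟨σ, rfl⟩) h, neg_one_zsmul]
  have hpm : ∀ σ : G, ε σ = 1 ∨ ε σ = -1 := fun σ => by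
    by_cases h : ρ σ ∈ C
    · exact Or.inl ((hε σ).1 h)
    · exact Or.inr ((hε σ).2 h)
  refine ⟨?_, A, hval⟩
  intro σ τ
  have h1 := hval (σ * τ)
  have h2 : ((A * ρ (σ * τ) * A⁻¹ : GL (Fin 2) (ZMod p)) : Matrix (Fin 2) (Fin 2) (ZMod p)) =
      (ε σ * ε τ) • ((ρ (σ * τ) : GL (Fin 2) (ZMod p)) : Matrix (Fin 2) (Fin 2) (ZMod p)) := by
    have e : A * ρ (σ * τ) * A⁻¹ = (A * ρ σ * A⁻¹) * (A * ρ τ * A⁻¹) := by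
      rw [_root_.map_mul]; group
    rw [e, Units.val_mul, hval σ, hval τ, smul_mul_assoc, mul_smul_comm, smul_smul,
      _root_.map_mul, Units.val_mul]
  have h3 : ε (σ * τ) • ((ρ (σ * τ) : GL (Fin 2) (ZMod p)) : Matrix (Fin 2) (Fin 2) (ZMod p)) =
      (ε σ * ε τ) • ((ρ (σ * τ) : GL (Fin 2) (ZMod p)) : Matrix (Fin 2) (Fin 2) (ZMod p)) :=
    h1.symm.trans h2
  have hMinv : ((ρ (σ * τ) : GL (Fin 2) (ZMod p)) : Matrix (Fin 2) (Fin 2) (ZMod p)) *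
      (((ρ (σ * τ))⁻¹ : GL (Fin 2) (ZMod p)) : Matrix (Fin 2) (Fin 2) (ZMod p)) = 1 := by
    rw [← Units.val_mul, mul_inv_cancel]; rfl
  have h5 : ε (σ * τ) • (1 : Matrix (Fin 2) (Fin 2) (ZMod p)) =
      (ε σ * ε τ) • (1 : Matrix (Fin 2) (Fin 2) (ZMod p)) := by
    rw [← hMinv, ← smul_mul_assoc, ← smul_mul_assoc, h3]
  have h6 := congrFun (congrFun h5 0) 0
  simp only [Matrix.smul_apply, Matrix.one_apply_eq, zsmul_eq_mul, mul_one] at h6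
  have hprod : ε σ * ε τ = 1 ∨ ε σ * ε τ = -1 := by
    rcases hpm σ with h | h <;> rcases hpm τ with h' | h' <;> rw [h, h'] <;> norm_num
  exact pm_cast p hp (hpm (σ * τ)) hprod h6
end

section
/- Let K be a number field in which −1 is not a square, and let u ∈ K*. Then u is a fourth power in the quadratic extension K(√−1) if and only if there exists v ∈ K* with u = v⁴ or u = −4·v⁴. -/
/-!
Statement 14: let `K` be a number field in which `−1` is not a square, and
`u ∈ K*`. Then `u` is a fourth power in `K(√−1)` if and only if `u = v⁴` or
`u = −4·v⁴` for some `v ∈ K*`.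
-/

theorem fourth_power_in_adjoin_sqrt_neg_one_iff
    (K L : Type*) [Field K] [NumberField K] [Field L] [Algebra K L]
    (hK : ¬ IsSquare (-1 : K))
    (i : L) (hi : i ^ 2 = -1) (hgen : IntermediateField.adjoin K {i} = ⊤)
    (u : K) (hu : u ≠ 0) :
    (∃ w : L, w ^ 4 = algebraMap K L u) ↔
      ∃ v : K, v ≠ 0 ∧ (u = v ^ 4 ∨ u = -4 * v ^ 4) := by
  have hinj : Function.Injective (algebraMap K L) := (algebraMap K L).injective
  -- linear independence of 1, i over K
  have indep : ∀ a b : K, algebraMap K L a + algebraMap K L b * i = 0 → a = 0 ∧ b = 0 := by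
    intro a b h
    by_cases hb : b = 0
    · subst hb
      simp only [map_zero, zero_mul, add_zero] at h
      exact ⟨hinj (by simpa using h), rfl⟩
    · exfalso
      apply hK
      have hbL : algebraMap K L b ≠ 0 := fun h0 => hb (hinj (by simpa using h0))
      have hiK : algebraMap K L (a / b) = -i := by
        rw [map_div₀, div_eq_iff hbL]
        linear_combination h
      have : ((a / b) ^ 2 : K) = -1 := by
        apply hinj
        rw [map_pow, map_neg, map_one, hiK]
        linear_combination hi
      exact ⟨a / b, by rw [← this]; ring⟩
  -- every element of L is of the form a + b i
  have repr : ∀ w : L, ∃ a b : K, w = algebraMap K L a + algebraMap K L b * i := by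
    have hint : IsIntegral K i := by
      refine ⟨Polynomial.X ^ 2 + 1, ?_, ?_⟩
      · apply Polynomial.monic_X_pow_add
        simp
      · simp [hi]
    let S : Subalgebra K L :=
      { carrier := {x | ∃ a b : K, x = algebraMap K L a + algebraMap K L b * i}
        mul_mem' := by
          rintro x y ⟨a, b, rfl⟩ ⟨c, d, rfl⟩
          refine ⟨a * c - b * d, a * d + b * c, ?_⟩
          simp only [map_sub, map_add, map_mul]
          linear_combination (algebraMap K L b * algebraMap K L d) * hi
        one_mem' := ⟨1, 0, by simp⟩
        add_mem' := by
          rintro x y ⟨a, b, rfl⟩ ⟨c, d, rfl⟩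
          exact ⟨a + c, b + d, by simp only [map_add]; ring⟩
        zero_mem' := ⟨0, 0, by simp⟩
        algebraMap_mem' := fun r => ⟨r, 0, by simp⟩ }
    have hiS : i ∈ S := ⟨0, 1, by simp⟩
    have hadj : Algebra.adjoin K {i} = ⊤ := by
      have h2 := IntermediateField.adjoin_simple_toSubalgebra_of_isAlgebraic hint.isAlgebraic
      rw [hgen] at h2
      rw [← h2, IntermediateField.top_toSubalgebra]
    have hS : S = ⊤ :=
      top_le_iff.mp (hadj ▸ Algebra.adjoin_le (Set.singleton_subset_iff.mpr hiS))
    intro w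
    have : w ∈ S := hS ▸ Algebra.mem_top
    exact this
  constructor
  · rintro ⟨w, hw⟩
    obtain ⟨c, d, rfl⟩ := repr w
    have key : algebraMap K L (c ^ 4 - 6 * c ^ 2 * d ^ 2 + d ^ 4 - u)
        + algebraMap K L (4 * c ^ 3 * d - 4 * c * d ^ 3) * i = 0 := by
      simp only [map_sub, map_add, map_mul, map_pow, map_ofNat]
      linear_combination hw + (-(6 * (algebraMap K L c) ^ 2 * (algebraMap K L d) ^ 2)
        - 4 * (algebraMap K L c) * (algebraMap K L d) ^ 3 * i
        + (algebraMap K L d) ^ 4 - (algebraMap K L d) ^ 4 * i ^ 2) * hi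
    obtain ⟨hA, hB⟩ := indep _ _ key
    have hA' : u = c ^ 4 - 6 * c ^ 2 * d ^ 2 + d ^ 4 := by linear_combination -hA
    have h4 : (4 : K) ≠ 0 := by norm_num
    have hfac : c * d * (c - d) * (c + d) = 0 := by
      apply mul_left_cancel₀ h4
      linear_combination hB
    rcases mul_eq_zero.mp hfac with h | hcd
    · rcases mul_eq_zero.mp h with h | hd
      · rcases mul_eq_zero.mp h with hc | hd
        · -- c = 0, u = d ^ 4
          refine ⟨d, fun h0 => hu (by rw [hA', hc, h0]; ring), Or.inl (by rw [hA', hc]; ring)⟩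
        · -- d = 0
          refine ⟨c, fun h0 => hu (by rw [hA', hd, h0]; ring), Or.inl (by rw [hA', hd]; ring)⟩
      · have hd' : d = c := by linear_combination -hd
        refine ⟨c, fun h0 => hu (by rw [hA', hd', h0]; ring), Or.inr (by rw [hA', hd']; ring)⟩
    · have hd' : d = -c := by linear_combination hcd
      refine ⟨c, fun h0 => hu (by rw [hA', hd', h0]; ring), Or.inr (by rw [hA', hd']; ring)⟩
  · rintro ⟨v, hv, rfl | rfl⟩
    · exact ⟨algebraMap K L v, by rw [map_pow]⟩
    · refine ⟨(1 + i) * algebraMap K L v, ?_⟩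
      rw [map_mul, map_neg, map_ofNat, map_pow]
      linear_combination ((algebraMap K L v) ^ 4 * (i ^ 2 + 4 * i + 5)) * hi
end

section
/- Let K be a number field in which −3 is not a square, and let u ∈ K*. Then u is a sixth power in the quadratic extension K(√−3) if and only if there exists v ∈ K* with u = v⁶ or u = −27·v⁶. -/
/-!
Statement 15: let `K` be a number field in which `−3` is not a square, and
`u ∈ K*`. Then `u` is a sixth power in `K(√−3)` if and only if `u = v⁶` or
`u = −27·v⁶` for some `v ∈ K*`.
-/

theorem sixth_power_in_adjoin_sqrt_neg_three_iff
    (K L : Type*) [Field K] [NumberField K] [Field L] [Algebra K L]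
    (hK : ¬ IsSquare (-3 : K))
    (s : L) (hs : s ^ 2 = -3) (hgen : IntermediateField.adjoin K {s} = ⊤)
    (u : K) (hu : u ≠ 0) :
    (∃ w : L, w ^ 6 = algebraMap K L u) ↔
      ∃ v : K, v ≠ 0 ∧ (u = v ^ 6 ∨ u = -27 * v ^ 6) := by
  have hinj : Function.Injective (algebraMap K L) := (algebraMap K L).injective
  have hsnot : ∀ c : K, algebraMap K L c ≠ s := by
    intro c hc
    apply hK
    refine ⟨c, hinj ?_⟩
    rw [map_mul, hc, ← sq, hs, map_neg, map_ofNat]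
  constructor
  · rintro ⟨w, hw⟩
    -- w = a + b s for some a b : K
    have hint : IsIntegral K s := by
      refine ⟨Polynomial.X ^ 2 + Polynomial.C 3, ?_, ?_⟩
      · apply Polynomial.monic_X_pow_add
        simp
      · simp only [Polynomial.eval₂_add, Polynomial.eval₂_pow, Polynomial.eval₂_X,
          Polynomial.eval₂_ofNat, Polynomial.eval₂_C, hs, map_ofNat]
        ring
    have hwA : w ∈ Algebra.adjoin K {s} := by
      rw [← IntermediateField.adjoin_simple_toSubalgebra_of_isAlgebraic hint.isAlgebraic]
      rw [hgen]; trivial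
    let S : Subalgebra K L :=
      { carrier := {x | ∃ a b : K, x = algebraMap K L a + algebraMap K L b * s}
        one_mem' := ⟨1, 0, by simp⟩
        add_mem' := by
          rintro x y ⟨a, b, rfl⟩ ⟨c, d, rfl⟩
          exact ⟨a + c, b + d, by rw [map_add, map_add]; ring⟩
        mul_mem' := by
          rintro x y ⟨a, b, rfl⟩ ⟨c, d, rfl⟩
          refine ⟨a * c - 3 * (b * d), a * d + b * c, ?_⟩
          simp only [map_mul, map_add, map_sub, map_ofNat]
          linear_combination (algebraMap K L b * algebraMap K L d) * hs
        algebraMap_mem' := fun r => ⟨r, 0, by simp⟩ }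
    have hle : Algebra.adjoin K {s} ≤ S := by
      apply Algebra.adjoin_le
      intro x hx
      rw [Set.mem_singleton_iff] at hx
      exact ⟨0, 1, by simp [hx]⟩
    obtain ⟨a, b, hab⟩ := hle hwA
    set α := algebraMap K L a with hα
    set β := algebraMap K L b with hβ
    have key : algebraMap K L (a^6 - 45*a^4*b^2 + 135*a^2*b^4 - 27*b^6)
        + algebraMap K L (6*a^5*b - 60*a^3*b^3 + 54*a*b^5) * s
        = algebraMap K L u := by
      rw [← hw, hab]
      simp only [map_add, map_sub, map_mul, map_pow, map_ofNat, ← hα, ← hβ]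
      linear_combination (-(9*β^6) + 3*β^6*s^2 - β^6*s^4 + 18*α*β^5*s - 6*α*β^5*s^3
        + 45*α^2*β^4 - 15*α^2*β^4*s^2 - 20*α^3*β^3*s - 15*α^4*β^2) * hs
    have hQ : 6*a^5*b - 60*a^3*b^3 + 54*a*b^5 = 0 := by
      by_contra hQ
      have hQ0 : algebraMap K L (6*a^5*b - 60*a^3*b^3 + 54*a*b^5) ≠ 0 :=
        fun h => hQ (hinj (by rw [h, map_zero]))
      apply hsnot ((u - (a^6 - 45*a^4*b^2 + 135*a^2*b^4 - 27*b^6)) / (6*a^5*b - 60*a^3*b^3 + 54*a*b^5))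
      rw [map_div₀, div_eq_iff hQ0, map_sub, ← key]
      ring
    have hP : a^6 - 45*a^4*b^2 + 135*a^2*b^4 - 27*b^6 = u := by
      apply hinj
      rw [← key, hQ, map_zero, zero_mul, add_zero]
    -- factor Q
    have hfac : (6:K) * a * b * (a - b) * (a + b) * (a - 3*b) * (a + 3*b) = 0 := by
      rw [← hQ]; ring
    have h6 : (6:K) ≠ 0 := by norm_num
    rcases mul_eq_zero.mp hfac with h | h3b
    rcases mul_eq_zero.mp h with h | h3b'
    rcases mul_eq_zero.mp h with h | hab'
    rcases mul_eq_zero.mp h with h | hab''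
    rcases mul_eq_zero.mp h with h | hb
    · -- a = 0 : u = -27 b^6
      have ha : a = 0 := by
        rcases mul_eq_zero.mp h with h6 | ha
        · norm_num at h6
        · exact ha
      refine ⟨b, ?_, Or.inr ?_⟩
      · intro hb0; apply hu; rw [← hP, ha, hb0]; ring
      · rw [← hP, ha]; ring
    · -- b = 0 : u = a^6
      refine ⟨a, ?_, Or.inl ?_⟩
      · intro ha; apply hu; rw [← hP, ha, hb]; ring
      · rw [← hP, hb]; ring
    · -- a = b
      have hab3 : a = b := sub_eq_zero.mp hab''
      refine ⟨2*b, ?_, Or.inl ?_⟩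
      · intro h2b
        have hb0 : b = 0 := by
          rcases mul_eq_zero.mp h2b with h | h
          · norm_num at h
          · exact h
        apply hu; rw [← hP, hab3, hb0]; ring
      · rw [← hP, hab3]; ring
    · -- a = -b
      have hab3 : a = -b := add_eq_zero_iff_eq_neg.mp hab'
      refine ⟨2*b, ?_, Or.inl ?_⟩
      · intro h2b
        have hb0 : b = 0 := by
          rcases mul_eq_zero.mp h2b with h | h
          · norm_num at h
          · exact h
        apply hu; rw [← hP, hab3, hb0]; ring
      · rw [← hP, hab3]; ring
    · -- a = 3b
      have hab3 : a = 3*b := sub_eq_zero.mp h3b'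
      refine ⟨2*b, ?_, Or.inr ?_⟩
      · intro h2b
        have hb0 : b = 0 := by
          rcases mul_eq_zero.mp h2b with h | h
          · norm_num at h
          · exact h
        apply hu; rw [← hP, hab3, hb0]; ring
      · rw [← hP, hab3]; ring
    · -- a = -3b
      have hab3 : a = -(3*b) := add_eq_zero_iff_eq_neg.mp h3b
      refine ⟨2*b, ?_, Or.inr ?_⟩
      · intro h2b
        have hb0 : b = 0 := by
          rcases mul_eq_zero.mp h2b with h | h
          · norm_num at h
          · exact h
        apply hu; rw [← hP, hab3, hb0]; ring
      · rw [← hP, hab3]; ring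
  · rintro ⟨v, hv, h | h⟩
    · exact ⟨algebraMap K L v, by rw [← map_pow, h]⟩
    · refine ⟨algebraMap K L v * s, ?_⟩
      rw [h, map_mul, map_neg, map_ofNat, mul_pow, ← map_pow]
      have : s ^ 6 = -27 := by
        rw [show (6:ℕ) = 2*3 by norm_num, pow_mul, hs]; norm_num
      rw [this]; ring
end

section
/- Let p be a prime. Let B be the subgroup of GL₂(𝔽_p) consisting of invertible upper-triangular matrices, let U be the cyclic subgroup of B generated by the matrix [[1,1],[0,1]], and let D be a subgroup of the group of invertible diagonal matrices. Let H = D·U = { d·u : d ∈ D, u ∈ U }, which is a subgroup of B. Suppose φ is an automorphism of H such that for every x ∈ H the matrix φ(x) has the same diagonal entries as x. Then there exists A ∈ B such that φ(x) = A·x·A⁻¹ for all x ∈ H. -/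
open Matrix Pointwise

/-- The Borel subgroup of invertible upper-triangular matrices in `GL₂(𝔽_p)`. -/
def borelGL (p : ℕ) : Subgroup (GL (Fin 2) (ZMod p)) where
  carrier := {g | (g : Matrix (Fin 2) (Fin 2) (ZMod p)) 1 0 = 0}
  one_mem' := by simp [Matrix.one_apply]
  mul_mem' := fun {g h} hg hh => by
    have : ((g * h : GL (Fin 2) (ZMod p)) : Matrix (Fin 2) (Fin 2) (ZMod p)) 1 0 = 0 := by
      rw [Units.val_mul, Matrix.mul_apply, Fin.sum_univ_two]
      rw [Set.mem_setOf_eq] at hg hh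
      rw [hg, hh, zero_mul, mul_zero, add_zero]
    exact this
  inv_mem' := fun {g} hg => by
    have : ((g⁻¹ : GL (Fin 2) (ZMod p)) : Matrix (Fin 2) (Fin 2) (ZMod p)) 1 0 = 0 := by
      rw [Set.mem_setOf_eq] at hg
      rw [Matrix.coe_units_inv, Matrix.inv_def, Matrix.adjugate_fin_two, Matrix.smul_apply]
      simp [hg]
    exact this

/-- The invertible matrix `[[1,1],[0,1]]`. -/
def unipotent (p : ℕ) : GL (Fin 2) (ZMod p) :=
  ⟨!![1, 1; 0, 1], !![1, -1; 0, 1],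
    by rw [Matrix.mul_fin_two, Matrix.one_fin_two]; norm_num,
    by rw [Matrix.mul_fin_two, Matrix.one_fin_two]; norm_num⟩

/-!
Statement 17: let `B ≤ GL₂(𝔽_p)` be the Borel subgroup of upper-triangular
matrices, `U` the cyclic subgroup generated by `[[1,1],[0,1]]`, `D` a subgroup of
the invertible diagonal matrices, and `H = D·U`.  Any automorphism `φ` of `H`
preserving the diagonal entries of every element is conjugation by some `A ∈ B`.
-/


namespace Aux17

def up (p : ℕ) (b : ZMod p) : GL (Fin 2) (ZMod p) :=
  ⟨!![1, b; 0, 1], !![1, -b; 0, 1],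
    by rw [Matrix.mul_fin_two, Matrix.one_fin_two]; ring_nf,
    by rw [Matrix.mul_fin_two, Matrix.one_fin_two]; ring_nf⟩

variable {p : ℕ}

lemma up_val (b : ZMod p) : ((up p b : GL (Fin 2) (ZMod p)) : Matrix (Fin 2) (Fin 2) (ZMod p)) = !![1, b; 0, 1] := rfl

lemma up_mul (b b' : ZMod p) : up p b * up p b' = up p (b + b') := by
  ext : 1
  rw [Units.val_mul, up_val, up_val, up_val, Matrix.mul_fin_two]
  ring_nf

lemma up_zero : up p 0 = 1 := by
  ext : 1
  rw [up_val, Units.val_one, Matrix.one_fin_two]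

lemma up_pow (b : ZMod p) (n : ℕ) : (up p b) ^ n = up p (n * b) := by
  induction n with
  | zero => simp [up_zero]
  | succ n ih => rw [pow_succ, ih, up_mul]; push_cast; ring_nf

lemma up_inv (b : ZMod p) : (up p b)⁻¹ = up p (-b) := by
  rw [inv_eq_iff_mul_eq_one, up_mul]
  simp [up_zero]

lemma up_zpow (b : ZMod p) (k : ℤ) : (up p b) ^ k = up p (k * b) := by
  cases k with
  | ofNat n => rw [Int.ofNat_eq_coe, zpow_natCast, up_pow]; push_cast; ring_nf
  | negSucc n =>
      rw [zpow_negSucc, up_pow, up_inv]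
      congr 1
      push_cast
      ring

lemma diag_fin_two {α : Type*} [Zero α] (v : Fin 2 → α) :
    Matrix.diagonal v = !![v 0, 0; 0, v 1] := by
  ext i j
  fin_cases i <;> fin_cases j <;> simp [Matrix.diagonal]

lemma matpow {R : Type*} [CommRing R] (a q : R) (n : ℕ) :
    (!![a, q; 0, a]) ^ (n + 1) = !![a ^ (n+1), (n+1) * a ^ n * q; 0, a ^ (n+1)] := by
  induction n with
  | zero => norm_num
  | succ n ih =>
      rw [pow_succ, ih, Matrix.mul_fin_two]
      ext i j
      fin_cases i <;> fin_cases j <;> push_cast <;> simp <;> ring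

end Aux17

theorem automorphism_of_DU_is_inner (p : ℕ) [Fact p.Prime]
    (D : Subgroup (GL (Fin 2) (ZMod p))) (hD : D ≤ diagGL p)
    (H : Subgroup (GL (Fin 2) (ZMod p)))
    (hH : (H : Set (GL (Fin 2) (ZMod p))) =
      (D : Set (GL (Fin 2) (ZMod p))) * (Subgroup.zpowers (unipotent p) : Set (GL (Fin 2) (ZMod p))))
    (φ : H ≃* H)
    (hφ : ∀ x : H,
      ((φ x : GL (Fin 2) (ZMod p)) : Matrix (Fin 2) (Fin 2) (ZMod p)) 0 0 =
        ((x : GL (Fin 2) (ZMod p)) : Matrix (Fin 2) (Fin 2) (ZMod p)) 0 0 ∧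
      ((φ x : GL (Fin 2) (ZMod p)) : Matrix (Fin 2) (Fin 2) (ZMod p)) 1 1 =
        ((x : GL (Fin 2) (ZMod p)) : Matrix (Fin 2) (Fin 2) (ZMod p)) 1 1) :
    ∃ A ∈ borelGL p, ∀ x : H,
      (φ x : GL (Fin 2) (ZMod p)) = A * (x : GL (Fin 2) (ZMod p)) * A⁻¹ := by
  classical
  open Aux17 in
  have huni : unipotent p = up p 1 := rfl
  -- membership characterization
  have hmem : ∀ x : GL (Fin 2) (ZMod p),
      x ∈ H ↔ ∃ d ∈ D, ∃ b : ZMod p, x = d * Aux17.up p b := by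
    intro x
    constructor
    · intro hx
      have hx' : x ∈ (H : Set (GL (Fin 2) (ZMod p))) := hx
      rw [hH, Set.mem_mul] at hx'
      obtain ⟨d, hd, v, hv, rfl⟩ := hx'
      rw [SetLike.mem_coe, Subgroup.mem_zpowers_iff] at hv
      obtain ⟨k, rfl⟩ := hv
      refine ⟨d, hd, (k : ZMod p), ?_⟩
      rw [huni, Aux17.up_zpow, mul_one]
    · rintro ⟨d, hd, b, rfl⟩
      rw [← SetLike.mem_coe, hH]
      refine Set.mul_mem_mul hd ?_
      rw [SetLike.mem_coe, Subgroup.mem_zpowers_iff]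
      refine ⟨(b.val : ℤ), ?_⟩
      rw [huni, Aux17.up_zpow, mul_one]
      congr 1
      push_cast
      simp [ZMod.natCast_val, ZMod.cast_id]
  have hDH : ∀ {d : GL (Fin 2) (ZMod p)}, d ∈ D → d ∈ H := by
    intro d hd
    exact (hmem d).mpr ⟨d, hd, 0, by rw [Aux17.up_zero, mul_one]⟩
  have hupH : ∀ b : ZMod p, Aux17.up p b ∈ H := fun b =>
    (hmem _).mpr ⟨1, one_mem D, b, (one_mul _).symm⟩
  -- entries of elements of H : upper triangular
  have tri : ∀ x : H, ((x : GL (Fin 2) (ZMod p)) : Matrix (Fin 2) (Fin 2) (ZMod p)) 1 0 = 0 := by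
    intro x
    obtain ⟨d, hd, b, hx⟩ := (hmem x).mp x.2
    obtain ⟨v, hv⟩ := hD hd
    have : ((x : GL (Fin 2) (ZMod p)) : Matrix (Fin 2) (Fin 2) (ZMod p)) =
        !![v 0, v 0 * b; 0, v 1] := by
      rw [hx, Units.val_mul, hv, Aux17.up_val, Aux17.diag_fin_two, Matrix.mul_fin_two]
      ring_nf
    rw [this]
    simp
  -- shape of φ x
  have φshape : ∀ x : H, ((φ x : GL (Fin 2) (ZMod p)) : Matrix (Fin 2) (Fin 2) (ZMod p)) =
      !![((x : GL (Fin 2) (ZMod p)) : Matrix (Fin 2) (Fin 2) (ZMod p)) 0 0,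
         ((φ x : GL (Fin 2) (ZMod p)) : Matrix (Fin 2) (Fin 2) (ZMod p)) 0 1;
         0, ((x : GL (Fin 2) (ZMod p)) : Matrix (Fin 2) (Fin 2) (ZMod p)) 1 1] := by
    intro x
    obtain ⟨h00, h11⟩ := hφ x
    have h10 := tri (φ x)
    ext i j
    fin_cases i <;> fin_cases j <;> simp [h00, h11, h10]
  -- φ of the unipotent generator
  set uH : H := ⟨Aux17.up p 1, hupH 1⟩ with huH
  set c : ZMod p := ((φ uH : GL (Fin 2) (ZMod p)) : Matrix (Fin 2) (Fin 2) (ZMod p)) 0 1 with hc_def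
  have hc : (φ uH : GL (Fin 2) (ZMod p)) = Aux17.up p c := by
    ext : 1
    rw [Aux17.up_val, φshape uH]
    have h1 : ((uH : GL (Fin 2) (ZMod p)) : Matrix (Fin 2) (Fin 2) (ZMod p)) = !![1,1;0,1] := rfl
    rw [h1]
    norm_num
    exact hc_def.symm
  have hc_ne : c ≠ 0 := by
    intro h0
    have h1 : φ uH = 1 := by
      have : (φ uH : GL (Fin 2) (ZMod p)) = 1 := by
        rw [hc, h0, Aux17.up_zero]
      exact Subtype.ext this
    have h2 : uH = 1 := by
      have hone : φ (1 : H) = 1 := map_one φ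
      exact φ.injective (h1.trans hone.symm)
    have h3 : (Aux17.up p (1 : ZMod p) : GL (Fin 2) (ZMod p)) = 1 := congrArg Subtype.val h2
    have h4 : ((Aux17.up p (1 : ZMod p) : GL (Fin 2) (ZMod p)) :
        Matrix (Fin 2) (Fin 2) (ZMod p)) 0 1 = (1 : ZMod p) := by
      rw [Aux17.up_val]; simp
    rw [h3] at h4
    simp [Matrix.one_apply] at h4
  -- φ on unipotents
  have φup : ∀ b : ZMod p, (φ ⟨Aux17.up p b, hupH b⟩ : GL (Fin 2) (ZMod p)) = Aux17.up p (c * b) := by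
    intro b
    have hpow : (⟨Aux17.up p b, hupH b⟩ : H) = uH ^ (b.val) := by
      apply Subtype.ext
      push_cast
      show Aux17.up p b = (Aux17.up p 1) ^ (b.val)
      rw [Aux17.up_pow, mul_one]
      congr 1
      simp [ZMod.natCast_val, ZMod.cast_id]
    rw [hpow, map_pow]
    push_cast
    rw [hc, Aux17.up_pow]
    congr 1
    rw [mul_comm]
    congr 1
    simp [ZMod.natCast_val, ZMod.cast_id]
  -- the cocycle relation on D
  have qrel : ∀ d₁ d₂ (h₁ : d₁ ∈ D) (h₂ : d₂ ∈ D),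
      ((φ ⟨d₁, hDH h₁⟩ : GL (Fin 2) (ZMod p)) : Matrix (Fin 2) (Fin 2) (ZMod p)) 0 1 *
        ((d₂ : Matrix (Fin 2) (Fin 2) (ZMod p)) 1 1 -
          (d₂ : Matrix (Fin 2) (Fin 2) (ZMod p)) 0 0) =
      ((φ ⟨d₂, hDH h₂⟩ : GL (Fin 2) (ZMod p)) : Matrix (Fin 2) (Fin 2) (ZMod p)) 0 1 *
        ((d₁ : Matrix (Fin 2) (Fin 2) (ZMod p)) 1 1 -
          (d₁ : Matrix (Fin 2) (Fin 2) (ZMod p)) 0 0) := by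
    intro d₁ d₂ h₁ h₂
    obtain ⟨v₁, hv₁⟩ := hD h₁
    obtain ⟨v₂, hv₂⟩ := hD h₂
    set x₁ : H := ⟨d₁, hDH h₁⟩ with hx₁
    set x₂ : H := ⟨d₂, hDH h₂⟩ with hx₂
    have hcomm : x₁ * x₂ = x₂ * x₁ := by
      apply Subtype.ext
      show d₁ * d₂ = d₂ * d₁
      apply Units.ext
      rw [Units.val_mul, Units.val_mul, hv₁, hv₂, Matrix.diagonal_mul_diagonal,
        Matrix.diagonal_mul_diagonal]
      simp [mul_comm]
    have h' : φ x₁ * φ x₂ = φ x₂ * φ x₁ := by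
      rw [← _root_.map_mul, ← _root_.map_mul, hcomm]
    have h := congrArg
      (fun z : H => ((z : GL (Fin 2) (ZMod p)) : Matrix (Fin 2) (Fin 2) (ZMod p)) 0 1) h'
    simp only [Subgroup.coe_mul, Units.val_mul] at h
    rw [Matrix.mul_apply, Matrix.mul_apply, Fin.sum_univ_two, Fin.sum_univ_two] at h
    rw [φshape x₁, φshape x₂] at h
    simp only [Matrix.of_apply, Matrix.cons_val', Matrix.cons_val_zero, Matrix.cons_val_one,
      Matrix.head_cons, Matrix.head_fin_const, Matrix.empty_val',
      Matrix.cons_val_fin_one] at h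
    have e₁ : ((x₁ : GL (Fin 2) (ZMod p)) : Matrix (Fin 2) (Fin 2) (ZMod p)) = d₁ := rfl
    have e₂ : ((x₂ : GL (Fin 2) (ZMod p)) : Matrix (Fin 2) (Fin 2) (ZMod p)) = d₂ := rfl
    rw [e₁, e₂] at h
    linear_combination h
  -- the existence of t
  have key : ∃ t : ZMod p, ∀ d (hd : d ∈ D),
      ((φ ⟨d, hDH hd⟩ : GL (Fin 2) (ZMod p)) : Matrix (Fin 2) (Fin 2) (ZMod p)) 0 1 =
        t * ((d : Matrix (Fin 2) (Fin 2) (ZMod p)) 1 1 -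
          (d : Matrix (Fin 2) (Fin 2) (ZMod p)) 0 0) := by
    by_cases hsc : ∃ d₀, ∃ h₀ : d₀ ∈ D,
        (d₀ : Matrix (Fin 2) (Fin 2) (ZMod p)) 1 1 ≠ (d₀ : Matrix (Fin 2) (Fin 2) (ZMod p)) 0 0
    · obtain ⟨d₀, h₀, hne⟩ := hsc
      have hne' : (d₀ : Matrix (Fin 2) (Fin 2) (ZMod p)) 1 1 -
          (d₀ : Matrix (Fin 2) (Fin 2) (ZMod p)) 0 0 ≠ 0 := sub_ne_zero.mpr hne
      refine ⟨((φ ⟨d₀, hDH h₀⟩ : GL (Fin 2) (ZMod p)) : Matrix (Fin 2) (Fin 2) (ZMod p)) 0 1 *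
        ((d₀ : Matrix (Fin 2) (Fin 2) (ZMod p)) 1 1 -
          (d₀ : Matrix (Fin 2) (Fin 2) (ZMod p)) 0 0)⁻¹, ?_⟩
      intro d hd
      have h := qrel d d₀ hd h₀
      field_simp
      linear_combination h
    · push_neg at hsc
      refine ⟨0, ?_⟩
      intro d hd
      rw [hsc d hd, sub_self, mul_zero]
      -- the scalar / order argument
      obtain ⟨v, hv⟩ := hD hd
      have hvv : v 1 = v 0 := by
        have h := hsc d hd
        rw [hv] at h
        simpa [Matrix.diagonal] using h
      have ha : v 0 ≠ 0 := by
        have hdet : IsUnit ((d : Matrix (Fin 2) (Fin 2) (ZMod p)).det) :=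
          (Matrix.isUnit_iff_isUnit_det _).mp d.isUnit
        rw [hv, Matrix.det_diagonal, Fin.prod_univ_two, isUnit_iff_ne_zero] at hdet
        exact left_ne_zero_of_mul hdet
      set x : H := ⟨d, hDH hd⟩ with hx
      have hx00 : ((x : GL (Fin 2) (ZMod p)) : Matrix (Fin 2) (Fin 2) (ZMod p)) 0 0 = v 0 := by
        show (d : Matrix (Fin 2) (Fin 2) (ZMod p)) 0 0 = v 0
        rw [hv]; simp
      have hx11 : ((x : GL (Fin 2) (ZMod p)) : Matrix (Fin 2) (Fin 2) (ZMod p)) 1 1 = v 0 := by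
        show (d : Matrix (Fin 2) (Fin 2) (ZMod p)) 1 1 = v 0
        rw [hv]; simp [hvv]
      have hp2 : p - 2 + 1 = p - 1 := by
        have := (Fact.out : p.Prime).two_le
        omega
      have hxp : x ^ (p - 1) = 1 := by
        apply Subtype.ext
        show d ^ (p - 1) = 1
        apply Units.ext
        rw [Units.val_pow_eq_pow_val, hv, Aux17.diag_fin_two, hvv, ← hp2, Aux17.matpow]
        rw [hp2, ZMod.pow_card_sub_one_eq_one ha, Units.val_one, Matrix.one_fin_two]
        norm_num
      have hφ1 : (φ x) ^ (p - 1) = 1 := by rw [← _root_.map_pow, hxp, _root_.map_one]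
      have hM : ((φ x : GL (Fin 2) (ZMod p)) : Matrix (Fin 2) (Fin 2) (ZMod p)) =
          !![v 0, ((φ x : GL (Fin 2) (ZMod p)) : Matrix (Fin 2) (Fin 2) (ZMod p)) 0 1;
             0, v 0] := by
        rw [φshape x, hx00, hx11]
        simp
      have hent := congrArg
        (fun z : H => ((z : GL (Fin 2) (ZMod p)) : Matrix (Fin 2) (Fin 2) (ZMod p)) 0 1) hφ1
      simp only [SubmonoidClass.coe_pow, Units.val_pow_eq_pow_val, OneMemClass.coe_one,
        Units.val_one] at hent
      rw [hM, ← hp2, Aux17.matpow] at hent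
      simp only [Matrix.of_apply, Matrix.cons_val', Matrix.cons_val_zero, Matrix.cons_val_one,
        Matrix.head_cons, Matrix.head_fin_const, Matrix.empty_val', Matrix.cons_val_fin_one,
        Matrix.one_apply_ne (by norm_num : (0 : Fin 2) ≠ 1)] at hent
      have hcoef : ((p - 2 : ℕ) : ZMod p) + 1 ≠ 0 := by
        have h2 : (2 : ℕ) ≤ p := (Fact.out : p.Prime).two_le
        have hc2 : ((p - 2 : ℕ) : ZMod p) = -2 := by
          rw [Nat.cast_sub h2]
          simp
        rw [hc2]
        intro hfalse
        have : (1 : ZMod p) = 0 := by linear_combination -hfalse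
        exact one_ne_zero this
      rcases mul_eq_zero.mp hent with h | h
      · rcases mul_eq_zero.mp h with h' | h'
        · exact absurd h' hcoef
        · exact absurd h' (pow_ne_zero _ ha)
      · exact h
  -- construct A
  obtain ⟨t, ht⟩ := key
  have hprod1 : (!![c, t; 0, 1] : Matrix (Fin 2) (Fin 2) (ZMod p)) *
      !![c⁻¹, -(c⁻¹ * t); 0, 1] = 1 := by
    rw [Matrix.mul_fin_two]
    ext i j
    fin_cases i <;> fin_cases j <;>
      simp [Matrix.one_apply] <;> field_simp <;> ring
  have hprod2 : (!![c⁻¹, -(c⁻¹ * t); 0, 1] : Matrix (Fin 2) (Fin 2) (ZMod p)) *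
      !![c, t; 0, 1] = 1 := by
    rw [Matrix.mul_fin_two]
    ext i j
    fin_cases i <;> fin_cases j <;>
      simp [Matrix.one_apply] <;> field_simp
  set A : GL (Fin 2) (ZMod p) :=
    ⟨!![c, t; 0, 1], !![c⁻¹, -(c⁻¹ * t); 0, 1], hprod1, hprod2⟩ with hA
  have hAval : ((A : GL (Fin 2) (ZMod p)) : Matrix (Fin 2) (Fin 2) (ZMod p)) =
      !![c, t; 0, 1] := rfl
  have hAinv : ((A⁻¹ : GL (Fin 2) (ZMod p)) : Matrix (Fin 2) (Fin 2) (ZMod p)) =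
      !![c⁻¹, -(c⁻¹ * t); 0, 1] := rfl
  refine ⟨A, ?_, ?_⟩
  · show ((A : GL (Fin 2) (ZMod p)) : Matrix (Fin 2) (Fin 2) (ZMod p)) 1 0 = 0
    rw [hAval]
    simp
  · intro x
    obtain ⟨d, hd, b, hxeq⟩ := (hmem ↑x).mp x.2
    obtain ⟨v, hv⟩ := hD hd
    have ed00 : (d : Matrix (Fin 2) (Fin 2) (ZMod p)) 0 0 = v 0 := by rw [hv]; simp
    have ed11 : (d : Matrix (Fin 2) (Fin 2) (ZMod p)) 1 1 = v 1 := by rw [hv]; simp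
    have hxsplit : x = (⟨d, hDH hd⟩ : H) * ⟨Aux17.up p b, hupH b⟩ := Subtype.ext hxeq
    have hφx : (φ x : GL (Fin 2) (ZMod p)) =
        (φ ⟨d, hDH hd⟩ : GL (Fin 2) (ZMod p)) * Aux17.up p (c * b) := by
      rw [hxsplit, _root_.map_mul, Subgroup.coe_mul, φup b]
    have hφd : ((φ ⟨d, hDH hd⟩ : GL (Fin 2) (ZMod p)) : Matrix (Fin 2) (Fin 2) (ZMod p)) =
        !![v 0, t * (v 1 - v 0); 0, v 1] := by
      rw [φshape ⟨d, hDH hd⟩, ht d hd]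
      have e00 : (((⟨d, hDH hd⟩ : H) : GL (Fin 2) (ZMod p)) :
          Matrix (Fin 2) (Fin 2) (ZMod p)) 0 0 = v 0 := ed00
      have e11 : (((⟨d, hDH hd⟩ : H) : GL (Fin 2) (ZMod p)) :
          Matrix (Fin 2) (Fin 2) (ZMod p)) 1 1 = v 1 := ed11
      rw [e00, e11]
    apply Units.ext
    rw [hφx, Units.val_mul, hφd, Aux17.up_val, Units.val_mul, Units.val_mul, hAval, hAinv,
      hxeq, Units.val_mul, hv, Aux17.up_val, Aux17.diag_fin_two,
      Matrix.mul_fin_two, Matrix.mul_fin_two, Matrix.mul_fin_two, Matrix.mul_fin_two]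
    ext i j
    fin_cases i <;> fin_cases j <;> simp <;> field_simp <;> ring
end

section
/- Let p be a prime and G a group. Let ρ₁, ρ₂ : G → GL₂(𝔽_p) be group homomorphisms such that: (i) ker ρ₁ = ker ρ₂; (ii) the images of ρ₁ and ρ₂ are contained in the group of invertible upper-triangular matrices; (iii) for every σ ∈ G, the matrices ρ₁(σ) and ρ₂(σ) have the same diagonal entries (the (1,1)-entries agree and the (2,2)-entries agree); and (iv) the matrix [[1,1],[0,1]] belongs to the image of ρ₁ and to the image of ρ₂. Then there exists an invertible upper-triangular matrix A ∈ GL₂(𝔽_p) such that ρ₂(σ) = A·ρ₁(σ)·A⁻¹ for all σ ∈ G. -/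
open Matrix

private lemma mul2 {R : Type*} [CommRing R] (M N : Matrix (Fin 2) (Fin 2) R) (i j : Fin 2) :
    (M * N) i j = M i 0 * N 0 j + M i 1 * N 1 j := by
  simp [Matrix.mul_apply, Fin.sum_univ_two]

private lemma lit_mul {R : Type*} [CommRing R] (a1 b1 d1 a2 b2 d2 : R) :
    (!![a1, b1; 0, d1] : Matrix (Fin 2) (Fin 2) R) * !![a2, b2; 0, d2] =
      !![a1 * a2, a1 * b2 + b1 * d2; 0, d1 * d2] := by
  ext i j
  fin_cases i <;> fin_cases j <;> simp [mul2]

private lemma lit_entries {R : Type*} [CommRing R] {a b c d a' b' c' d' : R}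
    (h : (!![a, b; c, d] : Matrix (Fin 2) (Fin 2) R) = !![a', b'; c', d']) :
    a = a' ∧ b = b' ∧ c = c' ∧ d = d' :=
  ⟨by simpa using congrFun (congrFun h 0) 0, by simpa using congrFun (congrFun h 0) 1,
   by simpa using congrFun (congrFun h 1) 0, by simpa using congrFun (congrFun h 1) 1⟩

private lemma unipow {R : Type*} [CommRing R] (y : R) (n : ℕ) :
    (!![1, y; 0, 1] : Matrix (Fin 2) (Fin 2) R) ^ n = !![1, n * y; 0, 1] := by
  induction n with
  | zero => simp [Matrix.one_fin_two]
  | succ n ih =>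
      rw [pow_succ, ih]
      ext i j
      fin_cases i <;> fin_cases j <;>
        simp [Matrix.mul_apply, Fin.sum_univ_two] <;> push_cast <;> ring

private lemma tripow {R : Type*} [CommRing R] (t x : R) (n : ℕ) :
    (!![t, x; 0, t] : Matrix (Fin 2) (Fin 2) R) ^ (n + 1) =
      !![t ^ (n + 1), ((n + 1 : ℕ) : R) * t ^ n * x; 0, t ^ (n + 1)] := by
  induction n with
  | zero => simp
  | succ n ih =>
      rw [pow_succ, ih]
      ext i j
      fin_cases i <;> fin_cases j <;>
        simp [mul2] <;> push_cast <;> ring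

/-!
Statement 19: let `ρ₁, ρ₂ : G → GL₂(𝔽_p)` be homomorphisms with the same kernel,
images contained in the upper-triangular matrices and containing `[[1,1],[0,1]]`,
such that `ρ₁(σ)` and `ρ₂(σ)` have the same diagonal entries for every `σ`.  Then
`ρ₂` is conjugate to `ρ₁` by an invertible upper-triangular matrix.
-/

theorem conjugate_of_same_diagonal (p : ℕ) (hp : p.Prime)
    {G : Type*} [Group G] (ρ₁ ρ₂ : G →* GL (Fin 2) (ZMod p))
    (hker : ρ₁.ker = ρ₂.ker)
    (hupper₁ : ∀ σ : G, ((ρ₁ σ : GL (Fin 2) (ZMod p)) : Matrix (Fin 2) (Fin 2) (ZMod p)) 1 0 = 0)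
    (hupper₂ : ∀ σ : G, ((ρ₂ σ : GL (Fin 2) (ZMod p)) : Matrix (Fin 2) (Fin 2) (ZMod p)) 1 0 = 0)
    (hdiag : ∀ σ : G,
      ((ρ₁ σ : GL (Fin 2) (ZMod p)) : Matrix (Fin 2) (Fin 2) (ZMod p)) 0 0 =
        ((ρ₂ σ : GL (Fin 2) (ZMod p)) : Matrix (Fin 2) (Fin 2) (ZMod p)) 0 0 ∧
      ((ρ₁ σ : GL (Fin 2) (ZMod p)) : Matrix (Fin 2) (Fin 2) (ZMod p)) 1 1 =
        ((ρ₂ σ : GL (Fin 2) (ZMod p)) : Matrix (Fin 2) (Fin 2) (ZMod p)) 1 1)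
    (hunip₁ : ∃ σ : G,
      ((ρ₁ σ : GL (Fin 2) (ZMod p)) : Matrix (Fin 2) (Fin 2) (ZMod p)) = !![1, 1; 0, 1])
    (hunip₂ : ∃ σ : G,
      ((ρ₂ σ : GL (Fin 2) (ZMod p)) : Matrix (Fin 2) (Fin 2) (ZMod p)) = !![1, 1; 0, 1]) :
    ∃ A : GL (Fin 2) (ZMod p),
      ((A : GL (Fin 2) (ZMod p)) : Matrix (Fin 2) (Fin 2) (ZMod p)) 1 0 = 0 ∧
      ∀ σ : G, ρ₂ σ = A * ρ₁ σ * A⁻¹ := by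
  haveI := Fact.mk hp
  set M₁ : G → Matrix (Fin 2) (Fin 2) (ZMod p) :=
    fun σ => ((ρ₁ σ : GL (Fin 2) (ZMod p)) : Matrix (Fin 2) (Fin 2) (ZMod p)) with hM₁def
  set M₂ : G → Matrix (Fin 2) (Fin 2) (ZMod p) :=
    fun σ => ((ρ₂ σ : GL (Fin 2) (ZMod p)) : Matrix (Fin 2) (Fin 2) (ZMod p)) with hM₂def
  have hup₁ : ∀ σ : G, M₁ σ 1 0 = 0 := hupper₁
  have hup₂ : ∀ σ : G, M₂ σ 1 0 = 0 := hupper₂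
  set a : G → ZMod p := fun σ => M₁ σ 0 0 with hadef
  set d : G → ZMod p := fun σ => M₁ σ 1 1 with hddef
  set b₁ : G → ZMod p := fun σ => M₁ σ 0 1 with hb₁def
  set b₂ : G → ZMod p := fun σ => M₂ σ 0 1 with hb₂def
  have hM₁lit : ∀ σ : G, M₁ σ = !![a σ, b₁ σ; 0, d σ] := by
    intro σ
    rw [Matrix.eta_fin_two (M₁ σ), hup₁ σ]
  have hM₂lit : ∀ σ : G, M₂ σ = !![a σ, b₂ σ; 0, d σ] := by
    intro σ
    have hA2 : M₂ σ 0 0 = a σ := ((hdiag σ).1).symm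
    have hD2 : M₂ σ 1 1 = d σ := ((hdiag σ).2).symm
    rw [Matrix.eta_fin_two (M₂ σ), hup₂ σ, hA2, hD2]
  have hM₁mul : ∀ σ σ' : G, M₁ (σ * σ') = M₁ σ * M₁ σ' := by
    intro σ σ'
    show ((ρ₁ (σ * σ') : GL (Fin 2) (ZMod p)) : Matrix (Fin 2) (Fin 2) (ZMod p)) = _
    rw [_root_.map_mul]
    rfl
  have hM₂mul : ∀ σ σ' : G, M₂ (σ * σ') = M₂ σ * M₂ σ' := by
    intro σ σ'
    show ((ρ₂ (σ * σ') : GL (Fin 2) (ZMod p)) : Matrix (Fin 2) (Fin 2) (ZMod p)) = _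
    rw [_root_.map_mul]
    rfl
  have hM₁pow : ∀ (σ : G) (k : ℕ), M₁ (σ ^ k) = (M₁ σ) ^ k := by
    intro σ k
    show ((ρ₁ (σ ^ k) : GL (Fin 2) (ZMod p)) : Matrix (Fin 2) (Fin 2) (ZMod p)) = _
    rw [map_pow]
    exact Units.val_pow_eq_pow_val _ _
  have hM₂pow : ∀ (σ : G) (k : ℕ), M₂ (σ ^ k) = (M₂ σ) ^ k := by
    intro σ k
    show ((ρ₂ (σ ^ k) : GL (Fin 2) (ZMod p)) : Matrix (Fin 2) (Fin 2) (ZMod p)) = _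
    rw [map_pow]
    exact Units.val_pow_eq_pow_val _ _
  have hM₁one : M₁ 1 = 1 := by
    show ((ρ₁ 1 : GL (Fin 2) (ZMod p)) : Matrix (Fin 2) (Fin 2) (ZMod p)) = 1
    rw [_root_.map_one, Units.val_one]
  -- the multiplication rules for entries
  have hmul₁ : ∀ σ σ' : G,
      (!![a (σ * σ'), b₁ (σ * σ'); 0, d (σ * σ')] : Matrix (Fin 2) (Fin 2) (ZMod p)) =
        !![a σ * a σ', a σ * b₁ σ' + b₁ σ * d σ'; 0, d σ * d σ'] := by
    intro σ σ'
    rw [← hM₁lit, hM₁mul, hM₁lit σ, hM₁lit σ', lit_mul]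
  have hmul₂ : ∀ σ σ' : G,
      (!![a (σ * σ'), b₂ (σ * σ'); 0, d (σ * σ')] : Matrix (Fin 2) (Fin 2) (ZMod p)) =
        !![a σ * a σ', a σ * b₂ σ' + b₂ σ * d σ'; 0, d σ * d σ'] := by
    intro σ σ'
    rw [← hM₂lit, hM₂mul, hM₂lit σ, hM₂lit σ', lit_mul]
  have ha_mul : ∀ σ σ' : G, a (σ * σ') = a σ * a σ' := fun σ σ' => (lit_entries (hmul₁ σ σ')).1
  have hd_mul : ∀ σ σ' : G, d (σ * σ') = d σ * d σ' := fun σ σ' => (lit_entries (hmul₁ σ σ')).2.2.2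
  have hb₁_mul : ∀ σ σ' : G, b₁ (σ * σ') = a σ * b₁ σ' + b₁ σ * d σ' :=
    fun σ σ' => (lit_entries (hmul₁ σ σ')).2.1
  have hb₂_mul : ∀ σ σ' : G, b₂ (σ * σ') = a σ * b₂ σ' + b₂ σ * d σ' :=
    fun σ σ' => (lit_entries (hmul₂ σ σ')).2.1
  -- nonvanishing of the diagonal entries
  have hdet : ∀ σ : G, a σ ≠ 0 ∧ d σ ≠ 0 := by
    intro σ
    have h1 : IsUnit (M₁ σ).det := (Matrix.isUnit_iff_isUnit_det _).1 (ρ₁ σ).isUnit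
    rw [hM₁lit σ, Matrix.det_fin_two_of] at h1
    simp only [mul_zero, sub_zero, isUnit_iff_ne_zero, mul_ne_zero_iff] at h1
    exact h1
  have ha1 : a 1 = 1 := by
    have h := hM₁one
    rw [Matrix.one_fin_two] at h
    exact (lit_entries ((hM₁lit 1).symm.trans h)).1
  have hd1 : d 1 = 1 := by
    have h := hM₁one
    rw [Matrix.one_fin_two] at h
    exact (lit_entries ((hM₁lit 1).symm.trans h)).2.2.2
  -- kernel transfer
  have hker' : ∀ g : G, M₁ g = 1 → M₂ g = 1 := by
    intro g h
    have hv : ((ρ₁ g : GL (Fin 2) (ZMod p)) : Matrix (Fin 2) (Fin 2) (ZMod p)) = 1 := h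
    have h1 : ρ₁ g = 1 := Units.ext (hv.trans Units.val_one.symm)
    have h2 : g ∈ ρ₁.ker := h1
    rw [hker] at h2
    have h3 : ρ₂ g = 1 := h2
    show ((ρ₂ g : GL (Fin 2) (ZMod p)) : Matrix (Fin 2) (Fin 2) (ZMod p)) = 1
    rw [h3, Units.val_one]
  have hker'' : ∀ g : G, M₂ g = 1 → M₁ g = 1 := by
    intro g h
    have hv : ((ρ₂ g : GL (Fin 2) (ZMod p)) : Matrix (Fin 2) (Fin 2) (ZMod p)) = 1 := h
    have h1 : ρ₂ g = 1 := Units.ext (hv.trans Units.val_one.symm)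
    have h2 : g ∈ ρ₂.ker := h1
    rw [← hker] at h2
    have h3 : ρ₁ g = 1 := h2
    show ((ρ₁ g : GL (Fin 2) (ZMod p)) : Matrix (Fin 2) (Fin 2) (ZMod p)) = 1
    rw [h3, Units.val_one]
  -- the distinguished unipotent element
  obtain ⟨τ, hτ⟩ := hunip₁
  have hτ' : M₁ τ = !![1, 1; 0, 1] := hτ
  have hτent := lit_entries ((hM₁lit τ).symm.trans hτ')
  have haτ : a τ = 1 := hτent.1
  have hb₁τ : b₁ τ = 1 := hτent.2.1
  have hdτ : d τ = 1 := hτent.2.2.2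
  set c : ZMod p := b₂ τ with hcdef
  have hM₂τ : M₂ τ = !![1, c; 0, 1] := by rw [hM₂lit τ, haτ, hdτ]
  have hc : c ≠ 0 := by
    intro h0
    have h1 : M₂ τ = 1 := by rw [hM₂τ, h0, Matrix.one_fin_two]
    have h2 := (hker'' τ h1).symm.trans hτ'
    rw [Matrix.one_fin_two] at h2
    exact one_ne_zero ((lit_entries h2).2.1.symm)
  have hpow₁ : ∀ k : ℕ, M₁ (τ ^ k) = !![1, (k : ZMod p); 0, 1] := by
    intro k
    rw [hM₁pow, hτ', unipow]
    simp
  have hpow₂ : ∀ k : ℕ, M₂ (τ ^ k) = !![1, (k : ZMod p) * c; 0, 1] := by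
    intro k
    rw [hM₂pow, hM₂τ, unipow]
  have hp1 : ((p - 1 : ℕ) : ZMod p) = -1 := by
    push_cast [Nat.cast_sub hp.one_le]
    simp
  have hn : p - 1 = (p - 2) + 1 := by
    have := hp.two_le
    omega
  -- Step 1: on elements with equal diagonal entries, b₂ = c * b₁
  have key0 : ∀ σ : G, a σ = d σ → b₂ σ = c * b₁ σ := by
    intro σ hσ
    have ht : a σ ≠ 0 := (hdet σ).1
    obtain ⟨k, hk⟩ : ∃ k : ℕ, (k : ZMod p) = - b₁ σ / a σ :=
      ⟨(- b₁ σ / a σ).val, (ZMod.natCast_val _).trans (ZMod.cast_id _ _)⟩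
    have hg1 : M₁ (σ * τ ^ k) = !![a σ, 0; 0, a σ] := by
      rw [hM₁mul, hpow₁, hM₁lit σ, lit_mul]
      ext i j
      fin_cases i <;> fin_cases j <;> simp [hk]
      · field_simp
        ring
      · exact hσ.symm
    have hg2 : M₂ (σ * τ ^ k) = !![a σ, b₂ σ - c * b₁ σ; 0, a σ] := by
      rw [hM₂mul, hpow₂, hM₂lit σ, lit_mul]
      ext i j
      fin_cases i <;> fin_cases j <;> simp [hk]
      · field_simp
        ring
      · exact hσ.symm
    have hgp1 : M₁ ((σ * τ ^ k) ^ (p - 1)) = 1 := by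
      rw [hM₁pow, hg1, hn, tripow, ← hn, ZMod.pow_card_sub_one_eq_one ht, Matrix.one_fin_two]
      simp
    have hgp2 : M₂ ((σ * τ ^ k) ^ (p - 1)) = 1 := hker' _ hgp1
    rw [hM₂pow, hg2, hn, tripow, ← hn, ZMod.pow_card_sub_one_eq_one ht,
      Matrix.one_fin_two] at hgp2
    have h01 := (lit_entries hgp2).2.1
    rw [hp1] at h01
    have h2 : a σ ^ (p - 2) ≠ 0 := pow_ne_zero _ ht
    have hx : b₂ σ - c * b₁ σ = 0 := by
      rcases mul_eq_zero.1 h01 with h | h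
      · rcases mul_eq_zero.1 h with h' | h'
        · exact absurd h' (by simp)
        · exact absurd h' h2
      · exact h
    linear_combination hx
  -- Step 2/3: the difference cocycle is a coboundary β * (d - a)
  have hstep3 : ∃ β : ZMod p, ∀ σ : G, b₂ σ - c * b₁ σ = β * (d σ - a σ) := by
    have hf0 : ∀ σ : G, a σ = d σ → b₂ σ - c * b₁ σ = 0 := by
      intro σ hσ
      rw [key0 σ hσ]
      ring
    by_cases hC : ∀ σ : G, a σ = d σ
    · exact ⟨0, fun σ => by rw [hf0 σ (hC σ), zero_mul]⟩
    · push_neg at hC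
      obtain ⟨σ₀, hσ₀⟩ := hC
      refine ⟨(b₂ σ₀ - c * b₁ σ₀) / (d σ₀ - a σ₀), fun σ => ?_⟩
      have hne : d σ₀ - a σ₀ ≠ 0 := sub_ne_zero.2 (Ne.symm hσ₀)
      have ha_inv : ∀ g : G, a g⁻¹ = (a g)⁻¹ := by
        intro g
        have h : a g * a g⁻¹ = 1 := by rw [← ha_mul, mul_inv_cancel, ha1]
        exact (inv_eq_of_mul_eq_one_right h).symm
      have hd_inv : ∀ g : G, d g⁻¹ = (d g)⁻¹ := by
        intro g
        have h : d g * d g⁻¹ = 1 := by rw [← hd_mul, mul_inv_cancel, hd1]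
        exact (inv_eq_of_mul_eq_one_right h).symm
      have hcomm : b₂ (σ * σ₀) - c * b₁ (σ * σ₀) = b₂ (σ₀ * σ) - c * b₁ (σ₀ * σ) := by
        have hah : a ((σ₀ * σ)⁻¹ * (σ * σ₀)) = 1 := by
          rw [ha_mul, ha_inv, ha_mul, ha_mul]
          field_simp [(hdet σ).1, (hdet σ₀).1]
        have hdh : d ((σ₀ * σ)⁻¹ * (σ * σ₀)) = 1 := by
          rw [hd_mul, hd_inv, hd_mul, hd_mul]
          field_simp [(hdet σ).2, (hdet σ₀).2]
        have hfh : b₂ ((σ₀ * σ)⁻¹ * (σ * σ₀)) - c * b₁ ((σ₀ * σ)⁻¹ * (σ * σ₀)) = 0 :=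
          hf0 _ (hah.trans hdh.symm)
        have hprod : σ * σ₀ = (σ₀ * σ) * ((σ₀ * σ)⁻¹ * (σ * σ₀)) := by group
        calc b₂ (σ * σ₀) - c * b₁ (σ * σ₀)
            = b₂ ((σ₀ * σ) * ((σ₀ * σ)⁻¹ * (σ * σ₀)))
              - c * b₁ ((σ₀ * σ) * ((σ₀ * σ)⁻¹ * (σ * σ₀))) := by rw [← hprod]
          _ = a (σ₀ * σ) * (b₂ ((σ₀ * σ)⁻¹ * (σ * σ₀)) - c * b₁ ((σ₀ * σ)⁻¹ * (σ * σ₀)))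
              + (b₂ (σ₀ * σ) - c * b₁ (σ₀ * σ)) * d ((σ₀ * σ)⁻¹ * (σ * σ₀)) := by
                rw [hb₂_mul, hb₁_mul]; ring
          _ = b₂ (σ₀ * σ) - c * b₁ (σ₀ * σ) := by rw [hfh, hdh]; ring
      have heq : (b₂ σ - c * b₁ σ) * (d σ₀ - a σ₀) = (b₂ σ₀ - c * b₁ σ₀) * (d σ - a σ) := by
        have e1 := hb₂_mul σ σ₀
        have e2 := hb₁_mul σ σ₀
        have e3 := hb₂_mul σ₀ σ
        have e4 := hb₁_mul σ₀ σ
        linear_combination -e1 + c * e2 + e3 - c * e4 + hcomm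
      field_simp
      linear_combination heq
  obtain ⟨β, hβ⟩ := hstep3
  -- Step 4: the conjugating matrix
  refine ⟨⟨!![c, β; 0, 1], !![c⁻¹, -(β * c⁻¹); 0, 1], ?_, ?_⟩, ?_, ?_⟩
  · rw [lit_mul, Matrix.one_fin_two]
    ext i j
    fin_cases i <;> fin_cases j <;> simp <;> field_simp <;> ring
  · rw [lit_mul, Matrix.one_fin_two]
    ext i j
    fin_cases i <;> fin_cases j <;> simp <;> field_simp <;> ring
  · simp
  · intro σ
    rw [eq_mul_inv_iff_mul_eq]
    apply Units.ext
    show M₂ σ * !![c, β; 0, 1] = !![c, β; 0, 1] * M₁ σ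
    rw [hM₁lit σ, hM₂lit σ, lit_mul, lit_mul]
    ext i j
    fin_cases i <;> fin_cases j <;> simp
    · ring
    · linear_combination hβ σ
end
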